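/- arXiv:0802.1360 — 5 statements merged into one kernel-verified Lean document; each statement's English description precedes it below -/
import Mathlib

section
/- If a completely positive trace-preserving map Φ from d_A×d_A matrices to d_B×d_B matrices maps every pure state to a pure state, then either Φ(ρ) = UρU† for some isometry U (so d_A ≤ d_B), or Φ(ρ) = (Tr ρ)|φ⟩⟨φ| for a fixed pure state |φ⟩. -/
open Matrix Kronecker BigOperators ComplexOrder

noncomputable def krausMap {n m ι : Type*} [Fintype n] [Fintype ι]
    (A : ι → Matrix m n ℂ) : Matrix n n ℂ →ₗ[ℂ] Matrix m m ℂ where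
  toFun ρ := ∑ k, A k * ρ * (A k)ᴴ
  map_add' ρ σ := by
    simp [Matrix.mul_add, Matrix.add_mul, Finset.sum_add_distrib]
  map_smul' c ρ := by
    simp [Matrix.mul_smul, Matrix.smul_mul, Finset.smul_sum]

noncomputable def complementMap {n m ι : Type*} [Fintype n] [Fintype m] [Fintype ι]
    (A : ι → Matrix m n ℂ) : Matrix n n ℂ →ₗ[ℂ] Matrix ι ι ℂ where
  toFun ρ := Matrix.of fun j k => (A j * ρ * (A k)ᴴ).trace
  map_add' ρ σ := by
    ext j k
    simp [Matrix.mul_add, Matrix.add_mul]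
  map_smul' c ρ := by
    ext j k
    simp [Matrix.mul_smul, Matrix.smul_mul]

noncomputable def choi {n m : Type*} [Fintype n] [DecidableEq n]
    (Φ : Matrix n n ℂ →ₗ[ℂ] Matrix m m ℂ) : Matrix (n × m) (n × m) ℂ :=
  Matrix.of fun p q => Φ (Matrix.single p.1 q.1 1) p.2 q.2

def IsCPTP {n m : Type*} [Fintype n] [DecidableEq n] [Fintype m]
    (Φ : Matrix n n ℂ →ₗ[ℂ] Matrix m m ℂ) : Prop :=
  (choi Φ).PosSemidef ∧ ∀ ρ, (Φ ρ).trace = ρ.trace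

def IsKrausRep {n m ι : Type*} [Fintype n] [DecidableEq n] [Fintype m] [Fintype ι]
    (A : ι → Matrix m n ℂ) (Φ : Matrix n n ℂ →ₗ[ℂ] Matrix m m ℂ) : Prop :=
  (∀ ρ, Φ ρ = ∑ k, A k * ρ * (A k)ᴴ) ∧ ∑ k, (A k)ᴴ * A k = 1

def Degradable {n m : Type*} [Fintype n] [DecidableEq n] [Fintype m] [DecidableEq m]
    (Φ : Matrix n n ℂ →ₗ[ℂ] Matrix m m ℂ) : Prop :=
  ∃ (e : ℕ) (A : Fin e → Matrix m n ℂ), IsKrausRep A Φ ∧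
    ∃ Ψ : Matrix m m ℂ →ₗ[ℂ] Matrix (Fin e) (Fin e) ℂ,
      IsCPTP Ψ ∧ Ψ ∘ₗ Φ = complementMap A

def AntiDegradable {n m : Type*} [Fintype n] [DecidableEq n] [Fintype m] [DecidableEq m]
    (Φ : Matrix n n ℂ →ₗ[ℂ] Matrix m m ℂ) : Prop :=
  ∃ (e : ℕ) (A : Fin e → Matrix m n ℂ), IsKrausRep A Φ ∧
    ∃ Λ : Matrix (Fin e) (Fin e) ℂ →ₗ[ℂ] Matrix m m ℂ,
      IsCPTP Λ ∧ Λ ∘ₗ complementMap A = Φ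

namespace PDAux


def LD {b : ℕ} (u v : Fin b → ℂ) : Prop := ∀ i j, u i * v j = u j * v i

lemma eq_smul_of_ld {b : ℕ} {u v : Fin b → ℂ} (h : LD u v) {i0 : Fin b} (h0 : u i0 ≠ 0) :
    v = (v i0 / u i0) • u := by
  funext j
  have := h i0 j
  rw [Pi.smul_apply, smul_eq_mul, div_mul_eq_mul_div, eq_div_iff h0]
  linear_combination this

lemma exists_smul_of_ld {b : ℕ} {u v : Fin b → ℂ} (h : LD u v) {i0 : Fin b} (h0 : u i0 ≠ 0) :
    ∃ c : ℂ, v = c • u := ⟨_, eq_smul_of_ld h h0⟩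

lemma ld_of_smul {b : ℕ} {u v φ : Fin b → ℂ} {c d : ℂ} (hu : u = c • φ) (hv : v = d • φ) :
    LD u v := by
  subst hu hv; intro i j
  simp only [Pi.smul_apply, smul_eq_mul]; ring

lemma exists_ne_zero_of_not_ld {b : ℕ} {u v : Fin b → ℂ} (h : ¬ LD u v) :
    (∃ i, u i ≠ 0) ∧ (∃ i, v i ≠ 0) := by
  constructor
  · by_contra hc
    push_neg at hc
    exact h (fun i j => by rw [hc i, hc j, zero_mul, zero_mul])
  · by_contra hc
    push_neg at hc
    exact h (fun i j => by rw [hc i, hc j, mul_zero, mul_zero])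

lemma pair_lemma {a b : ℕ} {A B : Matrix (Fin b) (Fin a) ℂ}
    (h : ∀ ψ, LD (A *ᵥ ψ) (B *ᵥ ψ))
    {ψ1 ψ2 : Fin a → ℂ} (hind : ¬ LD (A *ᵥ ψ1) (A *ᵥ ψ2)) :
    ∃ c : ℂ, B = c • A := by
  set u := A *ᵥ ψ1 with hu
  set w := A *ᵥ ψ2 with hw
  obtain ⟨⟨i1, hi1⟩, -⟩ := exists_ne_zero_of_not_ld hind
  set c := (B *ᵥ ψ1) i1 / u i1 with hc
  have hBψ1 : B *ᵥ ψ1 = c • u := eq_smul_of_ld (h ψ1) hi1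
  -- key step
  have key : ∀ ψ, ¬ LD u (A *ᵥ ψ) → B *ᵥ ψ = c • (A *ᵥ ψ) := by
    intro ψ hnd
    set x := A *ᵥ ψ with hx
    obtain ⟨-, ⟨j1, hj1⟩⟩ := exists_ne_zero_of_not_ld hnd
    set lam := (B *ᵥ ψ) j1 / x j1 with hlam
    have hy : B *ᵥ ψ = lam • x := eq_smul_of_ld (h ψ) hj1
    have hsum : LD (A *ᵥ (ψ1 + ψ)) (B *ᵥ (ψ1 + ψ)) := h _
    rw [mulVec_add, mulVec_add, hBψ1, hy, ← hu, ← hx] at hsum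
    have hlc : lam = c := by
      by_contra hne
      apply hnd
      intro i j
      have h1 := hsum i j
      simp only [Pi.add_apply, Pi.smul_apply, smul_eq_mul] at h1
      have h2 : (lam - c) * (u i * x j - u j * x i) = 0 := by ring_nf; linear_combination h1
      rcases mul_eq_zero.mp h2 with h3 | h3
      · exact absurd (sub_eq_zero.mp h3) hne
      · linear_combination h3
    rw [hy, hlc]
  -- general ψ
  have main : ∀ ψ, B *ᵥ ψ = c • (A *ᵥ ψ) := by
    intro ψ
    by_cases hnd : LD u (A *ᵥ ψ)
    · have hψ2 : B *ᵥ ψ2 = c • w := key ψ2 hind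
      obtain ⟨i0, j0, hij⟩ : ∃ i j, u i * w j ≠ u j * w i := by
        by_contra hcon; push_neg at hcon; exact hind fun i j => hcon i j
      have hAx : A *ᵥ ψ = ((A *ᵥ ψ) i1 / u i1) • u := eq_smul_of_ld hnd hi1
      set t := (A *ᵥ ψ) i1 / u i1 with ht
      have hnd2 : ¬ LD u (A *ᵥ (ψ + ψ2)) := by
        intro hld
        apply hij
        have := hld i0 j0
        rw [mulVec_add, hAx, ← hw] at this
        simp only [Pi.add_apply, Pi.smul_apply, smul_eq_mul] at this
        linear_combination this
      have h3 := key _ hnd2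
      rw [mulVec_add, mulVec_add, hψ2, hAx] at h3
      have : B *ᵥ ψ = c • (t • u + w) - c • w := by
        rw [← h3]; abel
      rw [this, hAx]
      module
    · exact key ψ hnd
  refine ⟨c, ?_⟩
  ext i j
  have := congrFun (main (Pi.single j 1)) i
  simpa [mulVec_single] using this



lemma normalize {n : ℕ} {ψ : Fin n → ℂ} (h : ψ ≠ 0) :
    ∃ (r : ℝ) (ψ' : Fin n → ℂ), 0 < r ∧ star ψ' ⬝ᵥ ψ' = 1 ∧ ψ = (r : ℂ) • ψ' := by
  have ht : 0 < star ψ ⬝ᵥ ψ := dotProduct_star_self_pos_iff.mpr h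
  set t := star ψ ⬝ᵥ ψ with htdef
  have htre : 0 < t.re ∧ t.im = 0 := by
    rw [Complex.lt_def] at ht; simpa using ⟨ht.1, ht.2.symm⟩
  have htc : (t.re : ℂ) = t := by
    rw [Complex.ext_iff]; simp [htre.2]
  set r := Real.sqrt t.re with hr
  have hrpos : 0 < r := Real.sqrt_pos.mpr htre.1
  have hr2 : (r : ℝ) * r = t.re := Real.mul_self_sqrt htre.1.le
  refine ⟨r, (r : ℂ)⁻¹ • ψ, hrpos, ?_, ?_⟩
  · have : star ((r : ℂ)⁻¹ • ψ) ⬝ᵥ ((r : ℂ)⁻¹ • ψ) = ((r:ℂ)⁻¹ * (r:ℂ)⁻¹) * t := by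
      rw [star_smul, smul_dotProduct, dotProduct_smul, ← htdef]
      simp [smul_eq_mul]
      ring
    rw [this, ← htc]
    have hrne : (r : ℂ) ≠ 0 := by
      simp [Complex.ext_iff, hrpos.ne']
    field_simp
    rw [← hr2]
    push_cast
    ring
  · rw [smul_smul]
    have hrne : (r : ℂ) ≠ 0 := by simp [Complex.ext_iff, hrpos.ne']
    rw [mul_inv_cancel₀ hrne, one_smul]

lemma conjug {a b : ℕ} (A : Matrix (Fin b) (Fin a) ℂ) (x : Fin a → ℂ) :
    A * vecMulVec x (star x) * Aᴴ = vecMulVec (A *ᵥ x) (star (A *ᵥ x)) := by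
  ext i j
  simp only [mul_apply, vecMulVec_apply, conjTranspose_apply, Pi.star_apply, mulVec, dotProduct]
  calc ∑ q, (∑ p, A i p * (x p * star (x q))) * star (A j q)
      = ∑ q, (∑ p, A i p * x p) * (star (x q) * star (A j q)) := by
        apply Finset.sum_congr rfl; intro q _
        rw [Finset.sum_mul]; rw [Finset.sum_mul]
        apply Finset.sum_congr rfl; intro p _; ring
    _ = (∑ p, A i p * x p) * ∑ q, star (x q) * star (A j q) := by
        rw [Finset.mul_sum]
    _ = (∑ p, A i p * x p) * star (∑ q, A j q * x q) := by
        congr 1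
        rw [star_sum]
        apply Finset.sum_congr rfl; intro q _
        rw [star_mul', mul_comm]


lemma rank_one_sum {b : ℕ} {κ : Type*} [Fintype κ] {v : κ → (Fin b → ℂ)} {φ : Fin b → ℂ}
    (hφ : star φ ⬝ᵥ φ = 1)
    (hE : ∀ i j, ∑ k, v k i * star (v k j) = φ i * star (φ j)) :
    ∀ k, v k = (star φ ⬝ᵥ v k) • φ := by
  classical
  set c : κ → ℂ := fun k => star φ ⬝ᵥ v k with hcdef
  have hφ' : ∑ i, star (φ i) * φ i = 1 := by simpa [dotProduct] using hφ
  have hck : ∀ k, ∑ i, star (φ i) * v k i = c k := by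
    intro k; simp [hcdef, dotProduct]
  have hckbar : ∀ k, ∑ i, star (v k i) * φ i = star (c k) := by
    intro k
    rw [← hck k, star_sum]
    apply Finset.sum_congr rfl; intro i _
    rw [star_mul', star_star, mul_comm]
  have hterm : ∀ k, star (v k - c k • φ) ⬝ᵥ (v k - c k • φ)
      = (∑ i, star (v k i) * v k i) - c k * star (c k) := by
    intro k
    simp only [dotProduct, Pi.sub_apply, Pi.smul_apply, Pi.star_apply, smul_eq_mul]
    have expand : ∀ i : Fin b, star (v k i - c k * φ i) * (v k i - c k * φ i)
        = (star (v k i) * v k i) - c k * (star (v k i) * φ i)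
          - star (c k) * (star (φ i) * v k i) + (c k * star (c k)) * (star (φ i) * φ i) := by
      intro i
      simp only [star_sub, star_mul', RCLike.star_def]
      ring
    rw [Finset.sum_congr rfl (fun i _ => expand i)]
    rw [Finset.sum_add_distrib, Finset.sum_sub_distrib, Finset.sum_sub_distrib,
      ← Finset.mul_sum, ← Finset.mul_sum, ← Finset.mul_sum, hck, hckbar, hφ']
    ring
  have hT : ∑ k, star (v k - c k • φ) ⬝ᵥ (v k - c k • φ) = 0 := by
    rw [Finset.sum_congr rfl (fun k _ => hterm k), Finset.sum_sub_distrib]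
    have h1 : ∑ k, ∑ i, star (v k i) * v k i = 1 := by
      rw [Finset.sum_comm]
      calc ∑ i, ∑ k, star (v k i) * v k i = ∑ i, star (φ i) * φ i := by
            apply Finset.sum_congr rfl; intro i _
            calc ∑ k, star (v k i) * v k i = ∑ k, v k i * star (v k i) := by
                  apply Finset.sum_congr rfl; intro k _; ring
              _ = φ i * star (φ i) := hE i i
              _ = star (φ i) * φ i := mul_comm _ _
        _ = 1 := hφ'
    have h2 : ∑ k, c k * star (c k) = 1 := by
      have hcconj : ∀ k, star (c k) = ∑ j, φ j * star (v k j) := by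
        intro k
        rw [← hck k, star_sum]
        apply Finset.sum_congr rfl; intro j _
        rw [star_mul', star_star, mul_comm]
      calc ∑ k, c k * star (c k)
          = ∑ k, ∑ i, ∑ j, (star (φ i) * φ j) * (v k i * star (v k j)) := by
            apply Finset.sum_congr rfl; intro k _
            rw [hcconj k, ← hck k, Finset.sum_mul_sum]
            apply Finset.sum_congr rfl; intro i _
            apply Finset.sum_congr rfl; intro j _
            ring
        _ = ∑ i, ∑ j, (star (φ i) * φ j) * (φ i * star (φ j)) := by
            rw [Finset.sum_comm]
            apply Finset.sum_congr rfl; intro i _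
            rw [Finset.sum_comm]
            apply Finset.sum_congr rfl; intro j _
            rw [← Finset.mul_sum, hE i j]
        _ = (∑ i, star (φ i) * φ i) * (∑ j, star (φ j) * φ j) := by
            rw [Finset.sum_mul_sum]
            apply Finset.sum_congr rfl; intro i _
            apply Finset.sum_congr rfl; intro j _
            ring
        _ = 1 := by rw [hφ']; ring
    rw [h1, h2]; ring
  intro k
  have hnn : ∀ k ∈ Finset.univ, (0:ℂ) ≤ star (v k - c k • φ) ⬝ᵥ (v k - c k • φ) :=
    fun k _ => dotProduct_star_self_nonneg _
  have hz := (Finset.sum_eq_zero_iff_of_nonneg hnn).mp hT k (Finset.mem_univ k)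
  have hw0 : v k - c k • φ = 0 := dotProduct_star_self_eq_zero.mp hz
  exact sub_eq_zero.mp hw0



lemma ext_basis {a : ℕ} {N : Type*} [AddCommMonoid N] [Module ℂ N]
    (f g : Matrix (Fin a) (Fin a) ℂ →ₗ[ℂ] N)
    (h : ∀ p q, f (Matrix.single p q 1) = g (Matrix.single p q 1)) (ρ) : f ρ = g ρ := by
  conv_lhs => rw [matrix_eq_sum_single ρ]
  conv_rhs => rw [matrix_eq_sum_single ρ]
  rw [map_sum, map_sum]
  apply Finset.sum_congr rfl; intro p _
  rw [map_sum, map_sum]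
  apply Finset.sum_congr rfl; intro q _
  have h' : Matrix.single p q (ρ p q) = (ρ p q) • Matrix.single p q 1 := by
    rw [smul_single, smul_eq_mul, mul_one]
  rw [h', LinearMap.map_smul, LinearMap.map_smul, h]

lemma eq_one_of_trace {a : ℕ} (M : Matrix (Fin a) (Fin a) ℂ)
    (h : ∀ ρ, (M * ρ).trace = ρ.trace) : M = 1 := by
  ext p q
  have h1 := h (Matrix.single q p 1)
  have h2 : (M * Matrix.single q p 1).trace = M p q := by
    simp only [Matrix.trace, Matrix.diag, Matrix.mul_apply, Matrix.single,
      Matrix.of_apply, mul_ite, mul_one, mul_zero]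
    have hrow : ∀ i, (∑ j, if q = j ∧ p = i then M i j else 0)
        = if p = i then M i q else 0 := by
      intro i
      by_cases hpi : p = i
      · simp [hpi, Finset.sum_ite_eq]
      · simp [hpi]
    rw [Finset.sum_congr rfl (fun i _ => hrow i)]
    simp [Finset.sum_ite_eq]
  have h3 : (Matrix.single q p 1 : Matrix (Fin a) (Fin a) ℂ).trace = if p = q then 1 else 0 := by
    simp only [Matrix.trace, Matrix.diag, Matrix.single, Matrix.of_apply]
    by_cases hpq : p = q
    · subst hpq; simp
    · rw [if_neg hpq]
      apply Finset.sum_eq_zero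
      intro i _
      rw [if_neg]
      rintro ⟨hq', hp'⟩
      exact hpq (hp'.trans hq'.symm)
  rw [h2, h3] at h1
  rw [h1, Matrix.one_apply]

lemma kraus_exists {a b : ℕ} (Φ : Matrix (Fin a) (Fin a) ℂ →ₗ[ℂ] Matrix (Fin b) (Fin b) ℂ)
    (hΦ : IsCPTP Φ) :
    ∃ A : (Fin a × Fin b) → Matrix (Fin b) (Fin a) ℂ,
      (∀ ρ, Φ ρ = ∑ k, A k * ρ * (A k)ᴴ) ∧ ∑ k, (A k)ᴴ * A k = 1 := by
  obtain ⟨B, hB⟩ : ∃ B : Matrix (Fin a × Fin b) (Fin a × Fin b) ℂ, choi Φ = Bᴴ * B := by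
    open scoped MatrixOrder Matrix.Norms.L2Operator in
    exact CStarAlgebra.nonneg_iff_eq_star_mul_self.mp hΦ.1.nonneg
  set A : (Fin a × Fin b) → Matrix (Fin b) (Fin a) ℂ :=
    fun k => Matrix.of (fun i p => star (B k (p, i))) with hA
  have hAapp : ∀ k i p, A k i p = star (B k (p, i)) := fun k i p => rfl
  have hbasis : ∀ p q : Fin a,
      Φ (Matrix.single p q 1)
        = ∑ k, A k * (Matrix.single p q 1 : Matrix (Fin a) (Fin a) ℂ) * (A k)ᴴ := by
    intro p q
    ext r s
    have hchoi : Φ (Matrix.single p q 1) r s = choi Φ (p, r) (q, s) := rfl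
    rw [hchoi, hB, Matrix.sum_apply]
    rw [Matrix.mul_apply]
    apply Finset.sum_congr rfl; intro k _
    have h1 : ∀ q', (A k * (Matrix.single p q 1 : Matrix (Fin a) (Fin a) ℂ)) r q'
        = if q = q' then A k r p else 0 := by
      intro q'
      simp only [Matrix.mul_apply, Matrix.single, Matrix.of_apply, mul_ite, mul_one,
        mul_zero]
      by_cases hq : q = q'
      · simp [hq, Finset.sum_ite_eq]
      · simp [hq]
    rw [Matrix.mul_apply]
    have h2 : ∀ q', (A k * (Matrix.single p q 1 : Matrix (Fin a) (Fin a) ℂ)) r q' * (A k)ᴴ q' s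
        = if q = q' then A k r p * star (A k s q') else 0 := by
      intro q'
      rw [h1 q', Matrix.conjTranspose_apply]
      split <;> simp
    rw [Finset.sum_congr rfl (fun q' _ => h2 q')]
    rw [Finset.sum_ite_eq Finset.univ q (fun q' => A k r p * star (A k s q'))]
    simp only [Finset.mem_univ, if_true, hAapp, star_star, Matrix.conjTranspose_apply]
  have hrep : ∀ ρ, Φ ρ = ∑ k, A k * ρ * (A k)ᴴ := by
    exact ext_basis Φ
      { toFun := fun ρ => ∑ k, A k * ρ * (A k)ᴴ
        map_add' := fun ρ σ => by
          simp [Matrix.mul_add, Matrix.add_mul, Finset.sum_add_distrib]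
        map_smul' := fun c ρ => by
          simp [Matrix.mul_smul, Matrix.smul_mul, Finset.smul_sum] }
      hbasis
  refine ⟨A, hrep, ?_⟩
  apply eq_one_of_trace
  intro ρ
  calc ((∑ k, (A k)ᴴ * A k) * ρ).trace = ∑ k, ((A k)ᴴ * A k * ρ).trace := by
        rw [Finset.sum_mul, trace_sum]
    _ = ∑ k, (A k * ρ * (A k)ᴴ).trace := by
        apply Finset.sum_congr rfl; intro k _
        rw [Matrix.mul_assoc, Matrix.trace_mul_comm, Matrix.mul_assoc]
    _ = (Φ ρ).trace := by rw [← trace_sum, ← hrep]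
    _ = ρ.trace := hΦ.2 ρ


end PDAux

/-- A CPTP map sending every pure state to a pure state is either
an isometry conjugation (so `d_A ≤ d_B`) or a constant map onto a fixed pure state. -/
theorem pure_to_pure_dichotomy {a b : ℕ}
    (Φ : Matrix (Fin a) (Fin a) ℂ →ₗ[ℂ] Matrix (Fin b) (Fin b) ℂ)
    (hΦ : IsCPTP Φ)
    (hpure : ∀ ψ : Fin a → ℂ, star ψ ⬝ᵥ ψ = 1 →
      ∃ φ : Fin b → ℂ, star φ ⬝ᵥ φ = 1 ∧
        Φ (Matrix.vecMulVec ψ (star ψ)) = Matrix.vecMulVec φ (star φ)) :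
    (∃ U : Matrix (Fin b) (Fin a) ℂ, a ≤ b ∧ Uᴴ * U = 1 ∧ ∀ ρ, Φ ρ = U * ρ * Uᴴ) ∨
    (∃ φ : Fin b → ℂ, star φ ⬝ᵥ φ = 1 ∧
      ∀ ρ, Φ ρ = ρ.trace • Matrix.vecMulVec φ (star φ)) := by
  classical
  open PDAux in
  rcases Nat.eq_zero_or_pos a with ha | ha
  · subst ha
    left
    refine ⟨0, Nat.zero_le b, Subsingleton.elim _ _, ?_⟩
    intro ρ
    rw [Subsingleton.elim ρ 0, map_zero]
    simp
  haveI : Nonempty (Fin a) := ⟨⟨0, ha⟩⟩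
  obtain ⟨A, hrep, hsum⟩ := kraus_exists Φ hΦ
  -- pairwise linear dependence of Kraus images
  have H3 : ∀ (ψ : Fin a → ℂ) (k l), LD (A k *ᵥ ψ) (A l *ᵥ ψ) := by
    intro ψ k l
    by_cases hψ0 : ψ = 0
    · subst hψ0
      intro i j
      simp [Matrix.mulVec_zero]
    obtain ⟨r, ψ', hr, hψ'1, rfl⟩ := normalize hψ0
    obtain ⟨φψ, hφ1, heq⟩ := hpure ψ' hψ'1
    have hmat : ∑ k, vecMulVec (A k *ᵥ ψ') (star (A k *ᵥ ψ')) = vecMulVec φψ (star φψ) := by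
      rw [← heq, hrep]
      exact Finset.sum_congr rfl fun k _ => (conjug (A k) ψ').symm
    have hE : ∀ i j, ∑ k, (A k *ᵥ ψ') i * star ((A k *ᵥ ψ') j) = φψ i * star (φψ j) := by
      intro i j
      have h1 := congrFun (congrFun hmat i) j
      simpa [Matrix.sum_apply, Matrix.vecMulVec_apply] using h1
    have hco := rank_one_sum hφ1 hE
    obtain ⟨ck, hk⟩ : ∃ c : ℂ, A k *ᵥ ψ' = c • φψ := ⟨_, hco k⟩
    obtain ⟨cl, hl⟩ : ∃ c : ℂ, A l *ᵥ ψ' = c • φψ := ⟨_, hco l⟩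
    have hk' : A k *ᵥ ((r:ℂ) • ψ') = ((r:ℂ) * ck) • φψ := by
      rw [Matrix.mulVec_smul, hk, smul_smul]
    have hl' : A l *ᵥ ((r:ℂ) • ψ') = ((r:ℂ) * cl) • φψ := by
      rw [Matrix.mulVec_smul, hl, smul_smul]
    exact ld_of_smul hk' hl'
  by_cases hcase : ∃ (k : Fin a × Fin b) (ψ1 ψ2 : Fin a → ℂ), ¬ LD (A k *ᵥ ψ1) (A k *ᵥ ψ2)
  · -- isometry case
    left
    obtain ⟨k0, ψ1, ψ2, hind⟩ := hcase
    have hprop : ∀ k, ∃ c : ℂ, A k = c • A k0 := fun k =>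
      pair_lemma (fun ψ => H3 ψ k0 k) hind
    choose c hc using hprop
    set S : ℂ := ∑ k, star (c k) * c k with hS
    have hone : S • ((A k0)ᴴ * A k0) = 1 := by
      rw [← hsum, hS, Finset.sum_smul]
      apply Finset.sum_congr rfl; intro k _
      rw [hc k, Matrix.conjTranspose_smul, Matrix.smul_mul, Matrix.mul_smul, smul_smul]
    have hSnn : 0 ≤ S := Finset.sum_nonneg fun k _ => star_mul_self_nonneg (c k)
    have hSne : S ≠ 0 := by
      intro h0
      rw [h0, zero_smul] at hone
      obtain ⟨i0⟩ := ‹Nonempty (Fin a)›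
      have := congrFun (congrFun hone i0) i0
      simp [Matrix.one_apply] at this
    have hSpos : 0 < S := lt_of_le_of_ne hSnn (Ne.symm hSne)
    have hSre : 0 < S.re ∧ S.im = 0 := by
      rw [Complex.lt_def] at hSpos
      exact ⟨by simpa using hSpos.1, by simpa using hSpos.2.symm⟩
    have hSc : ((S.re : ℝ) : ℂ) = S := by
      rw [Complex.ext_iff]; simp [hSre.2]
    set t : ℝ := Real.sqrt S.re with htdef
    have htpos : 0 < t := Real.sqrt_pos.mpr hSre.1
    have ht2 : (t : ℝ) * t = S.re := Real.mul_self_sqrt hSre.1.le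
    have htS : ((t:ℂ)) * (t:ℂ) = S := by
      rw [← hSc]; push_cast [← ht2]; ring
    refine ⟨(t:ℂ) • A k0, ?_, ?_, ?_⟩
    · have h1 : ((1 : Matrix (Fin a) (Fin a) ℂ)).rank = a := by
        rw [Matrix.rank_one]; simp
      calc a = ((1 : Matrix (Fin a) (Fin a) ℂ)).rank := h1.symm
        _ = (((t:ℂ) • A k0)ᴴ * ((t:ℂ) • A k0)).rank := by
            rw [Matrix.conjTranspose_smul, Matrix.smul_mul, Matrix.mul_smul, smul_smul]
            have hstar : star ((t:ℂ)) = (t:ℂ) := by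
              rw [RCLike.star_def, Complex.conj_ofReal]
            rw [hstar, htS, hone]
        _ ≤ ((t:ℂ) • A k0).rank := Matrix.rank_mul_le_right _ _
        _ ≤ b := le_trans (Matrix.rank_le_card_height _) (by simp)
    · rw [Matrix.conjTranspose_smul, Matrix.smul_mul, Matrix.mul_smul, smul_smul]
      have hstar : star ((t:ℂ)) = (t:ℂ) := by
        rw [RCLike.star_def, Complex.conj_ofReal]
      rw [hstar, htS, hone]
    · intro ρ
      rw [hrep]
      have hterm : ∀ k, A k * ρ * (A k)ᴴ = (star (c k) * c k) • (A k0 * ρ * (A k0)ᴴ) := by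
        intro k
        rw [hc k, Matrix.conjTranspose_smul, Matrix.smul_mul, Matrix.smul_mul, Matrix.mul_smul,
          smul_smul, mul_comm (c k) (star (c k))]
      rw [Finset.sum_congr rfl (fun k _ => hterm k), ← Finset.sum_smul, ← hS]
      have hstar : star ((t:ℂ)) = (t:ℂ) := by
        rw [RCLike.star_def, Complex.conj_ofReal]
      rw [Matrix.conjTranspose_smul, Matrix.smul_mul, Matrix.smul_mul, Matrix.mul_smul,
        smul_smul, hstar, htS]
  · -- constant map case
    push_neg at hcase
    have hex : ∃ (k : Fin a × Fin b) (i : Fin b) (p : Fin a), A k i p ≠ 0 := by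
      by_contra hall
      push_neg at hall
      have h0 : (1 : Matrix (Fin a) (Fin a) ℂ) = 0 := by
        rw [← hsum]
        apply Finset.sum_eq_zero; intro k _
        have hk0 : A k = 0 := by ext i p; exact hall k i p
        rw [hk0]; simp
      obtain ⟨i0⟩ := ‹Nonempty (Fin a)›
      have := congrFun (congrFun h0 i0) i0
      simp [Matrix.one_apply] at this
    obtain ⟨k1, i1, p1, hk1⟩ := hex
    set u : Fin b → ℂ := A k1 *ᵥ Pi.single p1 1 with hu
    have hui1 : u i1 ≠ 0 := by
      simpa [hu, Matrix.mulVec_single] using hk1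
    have hcol : ∀ k (ψ : Fin a → ℂ), ∃ d : ℂ, A k *ᵥ ψ = d • u := by
      intro k ψ
      obtain ⟨t', hA1⟩ : ∃ c : ℂ, A k1 *ᵥ ψ = c • u :=
        exists_smul_of_ld (hcase k1 (Pi.single p1 1) ψ) hui1
      by_cases ht : (A k1 *ᵥ ψ) i1 = 0
      · have ht' : t' = 0 := by
          have h5 := congrFun hA1 i1
          rw [ht] at h5
          simp only [Pi.smul_apply, smul_eq_mul] at h5
          rcases mul_eq_zero.mp h5.symm with h6 | h6
          · exact h6
          · exact absurd h6 hui1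
        have hA10 : A k1 *ᵥ ψ = 0 := by rw [hA1, ht', zero_smul]
        have hψ' : A k1 *ᵥ (Pi.single p1 1 + ψ) = u := by
          rw [Matrix.mulVec_add, ← hu, hA10, add_zero]
        obtain ⟨e1, h1⟩ : ∃ c : ℂ, A k *ᵥ (Pi.single p1 1 + ψ) = c • u := by
          have h2 := H3 (Pi.single p1 1 + ψ) k1 k
          rw [hψ'] at h2
          exact exists_smul_of_ld h2 hui1
        obtain ⟨e0, h0⟩ : ∃ c : ℂ, A k *ᵥ Pi.single p1 1 = c • u :=
          exists_smul_of_ld (H3 (Pi.single p1 1) k1 k) hui1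
        refine ⟨e1 - e0, ?_⟩
        have h4 : A k *ᵥ ψ = A k *ᵥ (Pi.single p1 1 + ψ) - A k *ᵥ Pi.single p1 1 := by
          rw [Matrix.mulVec_add]; abel
        rw [h4, h1, h0, sub_smul]
      · have hti1 : (A k1 *ᵥ ψ) i1 ≠ 0 := ht
        obtain ⟨e, h2⟩ : ∃ c : ℂ, A k *ᵥ ψ = c • (A k1 *ᵥ ψ) :=
          exists_smul_of_ld (H3 ψ k1 k) hti1
        refine ⟨e * t', ?_⟩
        rw [h2, hA1, smul_smul]
    have hune : u ≠ 0 := fun h => hui1 (by simp [h])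
    obtain ⟨r, φ, hr, hφ1, huφ⟩ := normalize hune
    have hcol' : ∀ k (p : Fin a), ∃ d : ℂ, ∀ i, A k i p = d * φ i := by
      intro k p
      obtain ⟨d, hd⟩ := hcol k (Pi.single p 1)
      refine ⟨d * r, fun i => ?_⟩
      have h1 : A k i p = d * u i := by
        have h2 := congrFun hd i
        simpa [Matrix.mulVec_single] using h2
      rw [h1, huφ]
      simp only [Pi.smul_apply, smul_eq_mul]
      ring
    choose d hd using hcol'
    right
    refine ⟨φ, hφ1, ?_⟩
    intro ρ
    set s : ℂ := ∑ k, ∑ q, (∑ p, d k p * ρ p q) * star (d k q) with hs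
    have hmain : Φ ρ = s • vecMulVec φ (star φ) := by
      rw [hrep]
      ext i j
      rw [Matrix.sum_apply]
      simp only [Matrix.smul_apply, Matrix.vecMulVec_apply, Pi.star_apply, smul_eq_mul]
      calc ∑ k, (A k * ρ * (A k)ᴴ) i j
          = ∑ k, ∑ q, (∑ p, (d k p * φ i) * ρ p q) * star (d k q * φ j) := by
            apply Finset.sum_congr rfl; intro k _
            rw [Matrix.mul_apply]
            apply Finset.sum_congr rfl; intro q _
            rw [Matrix.mul_apply, Matrix.conjTranspose_apply]
            congr 1
            · apply Finset.sum_congr rfl; intro p _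
              rw [hd k p i]
            · rw [hd k q j]
        _ = ∑ k, ∑ q, ((∑ p, d k p * ρ p q) * star (d k q)) * (φ i * star (φ j)) := by
            apply Finset.sum_congr rfl; intro k _
            apply Finset.sum_congr rfl; intro q _
            have e1 : (∑ p, (d k p * φ i) * ρ p q) = (∑ p, d k p * ρ p q) * φ i := by
              rw [Finset.sum_mul]
              apply Finset.sum_congr rfl; intro p _; ring
            rw [e1, star_mul']
            ring
        _ = s * (φ i * star (φ j)) := by
            rw [hs, Finset.sum_mul]
            apply Finset.sum_congr rfl; intro k _
            rw [Finset.sum_mul]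
    have htr : (vecMulVec φ (star φ)).trace = 1 := by
      rw [← hφ1]
      simp [Matrix.trace, Matrix.diag, Matrix.vecMulVec_apply, dotProduct, mul_comm]
    have hs' : s = ρ.trace := by
      have h1 := hΦ.2 ρ
      rw [hmain, Matrix.trace_smul, htr, smul_eq_mul, mul_one] at h1
      exact h1
    rw [hmain, hs']
end

section
/- Let Φ: M_{d_A} → M_{d_B} be a degradable CPT map (i.e., there exists a CPT map Ψ with Ψ∘Φ = Φ^C, where Φ^C is the complementary channel). If there exists a pure state |ψ⟩ such that Φ(|ψ⟩⟨ψ|) has rank d_B (full rank), then the minimal environment dimension (Choi rank) d_E of Φ equals d_B. -/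
open Matrix Kronecker BigOperators ComplexOrder

set_option linter.unusedSectionVars false
set_option maxHeartbeats 1000000

variable {n m : Type*} [Fintype n] [DecidableEq n] [Fintype m] [DecidableEq m]

lemma aux_apply (Ψ : Matrix n n ℂ →ₗ[ℂ] Matrix m m ℂ) (X : Matrix n n ℂ) :
    Ψ X = ∑ i, ∑ j, X i j • Ψ (Matrix.single i j 1) := by
  conv_lhs => rw [matrix_eq_sum_single X]
  rw [map_sum]
  refine Finset.sum_congr rfl fun i _ => ?_
  rw [map_sum]
  refine Finset.sum_congr rfl fun j _ => ?_
  have : Matrix.single i j (X i j) = X i j • Matrix.single i j (1:ℂ) := by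
    rw [Matrix.smul_single, smul_eq_mul, mul_one]
  rw [this, _root_.map_smul]

set_option linter.unusedSectionVars false

lemma choi_herm_entry (Ψ : Matrix n n ℂ →ₗ[ℂ] Matrix m m ℂ)
    (hC : (choi Ψ).IsHermitian) (i j : n) (p q : m) :
    Ψ (Matrix.single j i 1) p q = star (Ψ (Matrix.single i j 1) q p) := by
  have h := congr_fun (congr_fun hC (j, p)) (i, q)
  simpa [choi, Matrix.conjTranspose_apply] using h.symm

lemma psi_conjTranspose (Ψ : Matrix n n ℂ →ₗ[ℂ] Matrix m m ℂ)
    (hC : (choi Ψ).IsHermitian) (Z : Matrix n n ℂ) :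
    Ψ (Zᴴ) = (Ψ Z)ᴴ := by
  ext p q
  rw [Matrix.conjTranspose_apply, aux_apply Ψ Zᴴ, aux_apply Ψ Z]
  simp only [Matrix.sum_apply, Matrix.smul_apply, smul_eq_mul, star_sum, star_mul',
    Matrix.conjTranspose_apply]
  rw [Finset.sum_comm]
  refine Finset.sum_congr rfl fun i _ => Finset.sum_congr rfl fun j _ => ?_
  rw [choi_herm_entry Ψ hC i j p q]

lemma sum_swap_4 {ι κ : Type*} [Fintype ι] [Fintype κ] (f : ι → ι → κ → κ → ℂ) :
    (∑ p : κ, ∑ q : κ, ∑ i : ι, ∑ j : ι, f i j p q) = ∑ i, ∑ j, ∑ p, ∑ q, f i j p q := by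
  calc (∑ p : κ, ∑ q : κ, ∑ i : ι, ∑ j : ι, f i j p q)
      = ∑ p : κ, ∑ i : ι, ∑ q : κ, ∑ j : ι, f i j p q :=
        Finset.sum_congr rfl fun p _ => Finset.sum_comm
    _ = ∑ i : ι, ∑ p : κ, ∑ q : κ, ∑ j : ι, f i j p q := Finset.sum_comm
    _ = ∑ i : ι, ∑ j : ι, ∑ p : κ, ∑ q : κ, f i j p q := by
        refine Finset.sum_congr rfl fun i _ => ?_
        calc (∑ p : κ, ∑ q : κ, ∑ j : ι, f i j p q)
            = ∑ p : κ, ∑ j : ι, ∑ q : κ, f i j p q :=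
              Finset.sum_congr rfl fun p _ => Finset.sum_comm
          _ = ∑ j : ι, ∑ p : κ, ∑ q : κ, f i j p q := Finset.sum_comm

lemma form_master (Ψ : Matrix n n ℂ →ₗ[ℂ] Matrix m m ℂ) (X : Matrix n n ℂ) (x : m → ℂ) :
    star x ⬝ᵥ (Ψ X) *ᵥ x =
      ∑ i, ∑ j, ∑ p, ∑ q, X i j * (star (x p) * (choi Ψ (i, p) (j, q) * x q)) := by
  rw [aux_apply Ψ X]
  simp only [dotProduct, Matrix.mulVec, Pi.star_apply, Matrix.sum_apply,
    Matrix.smul_apply, smul_eq_mul, Finset.sum_mul, Finset.mul_sum, choi, Matrix.of_apply]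
  rw [sum_swap_4 (fun i j p q =>
    star (x p) * (X i j * Ψ (Matrix.single i j 1) p q * x q))]
  refine Finset.sum_congr rfl fun i _ => Finset.sum_congr rfl fun j _ =>
    Finset.sum_congr rfl fun p _ => Finset.sum_congr rfl fun q _ => ?_
  ring

lemma dot_choi (Ψ : Matrix n n ℂ →ₗ[ℂ] Matrix m m ℂ) (z : n × m → ℂ) :
    star z ⬝ᵥ (choi Ψ) *ᵥ z =
      ∑ i, ∑ j, ∑ p, ∑ q, star (z (i, p)) * (choi Ψ (i, p) (j, q) * z (j, q)) := by
  simp only [dotProduct, Matrix.mulVec, Pi.star_apply, Fintype.sum_prod_type,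
    Finset.mul_sum]
  refine Finset.sum_congr rfl fun i _ => ?_
  exact Finset.sum_comm

lemma sum_swap_5 {ι κ : Type*} [Fintype ι] [Fintype κ] (f : ι → ι → ι → κ → κ → ℂ) :
    (∑ k : ι, ∑ i : ι, ∑ j : ι, ∑ p : κ, ∑ q : κ, f k i j p q)
      = ∑ i : ι, ∑ j : ι, ∑ p : κ, ∑ q : κ, ∑ k : ι, f k i j p q := by
  calc (∑ k : ι, ∑ i : ι, ∑ j : ι, ∑ p : κ, ∑ q : κ, f k i j p q)
      = ∑ i : ι, ∑ k : ι, ∑ j : ι, ∑ p : κ, ∑ q : κ, f k i j p q := Finset.sum_comm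
    _ = ∑ i : ι, ∑ j : ι, ∑ k : ι, ∑ p : κ, ∑ q : κ, f k i j p q :=
        Finset.sum_congr rfl fun i _ => Finset.sum_comm
    _ = ∑ i : ι, ∑ j : ι, ∑ p : κ, ∑ k : ι, ∑ q : κ, f k i j p q :=
        Finset.sum_congr rfl fun i _ => Finset.sum_congr rfl fun j _ => Finset.sum_comm
    _ = ∑ i : ι, ∑ j : ι, ∑ p : κ, ∑ q : κ, ∑ k : ι, f k i j p q :=
        Finset.sum_congr rfl fun i _ => Finset.sum_congr rfl fun j _ =>
          Finset.sum_congr rfl fun p _ => Finset.sum_comm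

lemma cp_psd (Ψ : Matrix n n ℂ →ₗ[ℂ] Matrix m m ℂ) (hC : (choi Ψ).PosSemidef)
    {X : Matrix n n ℂ} (hX : X.PosSemidef) : (Ψ X).PosSemidef := by
  obtain ⟨B, rfl⟩ := (by open scoped MatrixOrder in
    exact CStarAlgebra.nonneg_iff_eq_star_mul_self.mp hX.nonneg : ∃ B : Matrix n n ℂ, X = Bᴴ * B)
  refine Matrix.PosSemidef.of_dotProduct_mulVec_nonneg ?_ ?_
  · show (Ψ (Bᴴ * B))ᴴ = Ψ (Bᴴ * B)
    rw [← psi_conjTranspose Ψ hC.1]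
    congr 1
    rw [Matrix.conjTranspose_mul, Matrix.conjTranspose_conjTranspose]
  · intro x
    have key : star x ⬝ᵥ (Ψ (Bᴴ * B)) *ᵥ x =
        ∑ k, star (fun jq : n × m => B k jq.1 * x jq.2) ⬝ᵥ
          (choi Ψ) *ᵥ (fun jq : n × m => B k jq.1 * x jq.2) := by
      rw [form_master]
      conv_rhs => rw [Finset.sum_congr rfl (fun k _ => dot_choi Ψ (fun jq : n × m => B k jq.1 * x jq.2))]
      rw [sum_swap_5 (fun k i j p q =>
        star (B k i * x p) * (choi Ψ (i, p) (j, q) * (B k j * x q)))]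
      refine Finset.sum_congr rfl fun i _ => Finset.sum_congr rfl fun j _ =>
        Finset.sum_congr rfl fun p _ => Finset.sum_congr rfl fun q _ => ?_
      simp only [Matrix.mul_apply, Matrix.conjTranspose_apply, Finset.sum_mul, star_mul']
      refine Finset.sum_congr rfl fun k _ => ?_
      ring
    rw [key]
    exact Finset.sum_nonneg fun k _ => hC.dotProduct_mulVec_nonneg _

lemma star_dot_conjT (M : Matrix m m ℂ) (v : m → ℂ) :
    star v ⬝ᵥ Mᴴ *ᵥ v = star (star v ⬝ᵥ M *ᵥ v) := by
  simp only [dotProduct, Matrix.mulVec, Pi.star_apply, Matrix.conjTranspose_apply,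
    star_sum, star_mul', Finset.mul_sum, star_star]
  rw [Finset.sum_comm]
  exact Finset.sum_congr rfl fun p _ => Finset.sum_congr rfl fun q _ => by ring

lemma cs_kernel (Ψ : Matrix n n ℂ →ₗ[ℂ] Matrix m m ℂ) (hC : (choi Ψ).PosSemidef)
    (S : Matrix n n ℂ) (hS : IsUnit S.det)
    {W : Matrix n n ℂ} (hW : W.PosSemidef) {v : m → ℂ}
    (hv : (Ψ (Sᴴ * S)) *ᵥ v = 0) : (Ψ W) *ᵥ v = 0 := by
  have hzero : ∀ X : Matrix n n ℂ, star v ⬝ᵥ (Ψ (Sᴴ * X)) *ᵥ v = 0 := by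
    intro X
    set β := star v ⬝ᵥ (Ψ (Sᴴ * X)) *ᵥ v with hβ
    set A := star v ⬝ᵥ (Ψ (Xᴴ * X)) *ᵥ v with hA
    have e0 : star v ⬝ᵥ (Ψ (Sᴴ * S)) *ᵥ v = 0 := by rw [hv, dotProduct_zero]
    have e1 : star v ⬝ᵥ (Ψ (Xᴴ * S)) *ᵥ v = star β := by
      have hXS : Xᴴ * S = (Sᴴ * X)ᴴ := by
        rw [Matrix.conjTranspose_mul, Matrix.conjTranspose_conjTranspose]
      rw [hXS, psi_conjTranspose Ψ hC.1, star_dot_conjT]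
    have key : ∀ t : ℝ, (0:ℂ) ≤ A - (2 * t : ℝ) * Complex.normSq β := by
      intro t
      set c : ℂ := -(t : ℂ) * β with hc
      have expand : ((c • S + X)ᴴ * (c • S + X)) =
          (star c * c) • (Sᴴ * S) + (star c • (Sᴴ * X) + (c • (Xᴴ * S) + Xᴴ * X)) := by
        simp only [Matrix.conjTranspose_add, Matrix.conjTranspose_smul, Matrix.add_mul,
          Matrix.mul_add, Matrix.smul_mul, Matrix.mul_smul, smul_smul, add_assoc]
        rw [smul_add, smul_smul, mul_comm c (star c)]
        abel
      have hineq := (cp_psd Ψ hC (Matrix.posSemidef_conjTranspose_mul_self (c • S + X))).dotProduct_mulVec_nonneg v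
      rw [expand] at hineq
      simp only [map_add, _root_.map_smul, Matrix.add_mulVec, Matrix.smul_mulVec,
        dotProduct_add, dotProduct_smul, smul_eq_mul] at hineq
      rw [e0, e1, ← hβ, ← hA] at hineq
      have harr : star c * c * 0 + (star c * β + (c * star β + A)) =
          A - (2 * t : ℝ) * Complex.normSq β := by
        rw [hc]
        simp only [star_mul', star_neg, Complex.star_def, Complex.conj_ofReal]
        push_cast
        linear_combination (-2*(t:ℂ)) * Complex.mul_conj β
      rw [harr] at hineq
      exact hineq
    by_contra hne
    have hnsq : 0 < Complex.normSq β := Complex.normSq_pos.mpr hne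
    have ht := key ((A.re + 1) / (2 * Complex.normSq β))
    rw [Complex.le_def] at ht
    have hre := ht.1
    simp only [Complex.zero_re, Complex.sub_re, Complex.mul_re, Complex.ofReal_re,
      Complex.ofReal_im, zero_mul, sub_zero, mul_zero] at hre
    have : (2 * ((A.re + 1) / (2 * Complex.normSq β))) * Complex.normSq β = A.re + 1 := by
      field_simp
    rw [this] at hre
    linarith
  have hSH : IsUnit (Sᴴ).det := by
    rw [Matrix.det_conjTranspose]; exact hS.star
  have hWeq : Sᴴ * ((Sᴴ)⁻¹ * W) = W := by
    rw [← Matrix.mul_assoc, Matrix.mul_nonsing_inv _ hSH, Matrix.one_mul]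
  have h0 := hzero ((Sᴴ)⁻¹ * W)
  rw [hWeq] at h0
  exact ((cp_psd Ψ hC hW).dotProduct_mulVec_zero_iff v).mp h0

lemma rank_le_of_ker {k : ℕ} (X Y : Matrix (Fin k) (Fin k) ℂ)
    (h : ∀ v, Y *ᵥ v = 0 → X *ᵥ v = 0) : X.rank ≤ Y.rank := by
  have hk : LinearMap.ker Y.mulVecLin ≤ LinearMap.ker X.mulVecLin := by
    intro v hv
    rw [LinearMap.mem_ker] at hv ⊢
    exact h v hv
  have h1 := LinearMap.finrank_range_add_finrank_ker X.mulVecLin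
  have h2 := LinearMap.finrank_range_add_finrank_ker Y.mulVecLin
  have hfk := Submodule.finrank_mono hk
  have hX : X.rank = Module.finrank ℂ (LinearMap.range X.mulVecLin) := rfl
  have hY : Y.rank = Module.finrank ℂ (LinearMap.range Y.mulVecLin) := rfl
  simp only [Module.finrank_fin_fun] at h1 h2
  omega

lemma full_rank_isUnit_det {k : ℕ} (S : Matrix (Fin k) (Fin k) ℂ) (hS : S.rank = k) :
    IsUnit S.det := by
  rw [isUnit_iff_ne_zero]
  intro hdet
  obtain ⟨v, hv0, hv⟩ := (Matrix.exists_mulVec_eq_zero_iff).mpr hdet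
  have h2 := LinearMap.finrank_range_add_finrank_ker S.mulVecLin
  have hSr : S.rank = Module.finrank ℂ (LinearMap.range S.mulVecLin) := rfl
  simp only [Module.finrank_fin_fun] at h2
  have hker0 : Module.finrank ℂ (LinearMap.ker S.mulVecLin) = 0 := by omega
  have : LinearMap.ker S.mulVecLin = ⊥ := Submodule.finrank_eq_zero.mp hker0
  have hv' : v ∈ LinearMap.ker S.mulVecLin := by
    rw [LinearMap.mem_ker]; exact hv
  rw [this, Submodule.mem_bot] at hv'
  exact hv0 hv'

/-- a degradable channel having a pure input with full-rank output
has Choi rank equal to the output dimension. -/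
theorem degradable_fullRank_choiRank {a b : ℕ}
    (Φ : Matrix (Fin a) (Fin a) ℂ →ₗ[ℂ] Matrix (Fin b) (Fin b) ℂ)
    (hΦ : IsCPTP Φ) (hdeg : Degradable Φ)
    (hfull : ∃ ψ : Fin a → ℂ, star ψ ⬝ᵥ ψ = 1 ∧
      (Φ (Matrix.vecMulVec ψ (star ψ))).rank = b) :
    (choi Φ).rank = b := by
  obtain ⟨ψ, _hψ, hrank⟩ := hfull
  obtain ⟨e, A, ⟨hKraus, hTP⟩, Ψ, hΨ, hcomp⟩ := hdeg
  set M : Matrix (Fin b) (Fin e) ℂ := Matrix.of fun i k => (A k *ᵥ ψ) i with hM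
  set N : Matrix (Fin e) (Fin a × Fin b) ℂ := Matrix.of fun k p => star (A k p.2 p.1) with hN
  have hP : Φ (Matrix.vecMulVec ψ (star ψ)) = M * Mᴴ := by
    rw [hKraus]
    ext i j
    rw [Matrix.sum_apply, Matrix.mul_apply]
    refine Finset.sum_congr rfl fun k _ => ?_
    simp only [Matrix.mul_apply, Matrix.conjTranspose_apply, Matrix.vecMulVec_apply,
      Pi.star_apply, Matrix.of_apply, Matrix.mulVec, dotProduct, star_sum, star_mul',
      Finset.sum_mul, Finset.mul_sum, hM]
    refine Finset.sum_congr rfl fun s _ => Finset.sum_congr rfl fun t _ => by ring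
  have hMrank : M.rank = b := by
    rw [← Matrix.rank_self_mul_conjTranspose, ← hP, hrank]
  have hchoi : choi Φ = Nᴴ * N := by
    ext p q
    simp only [choi, Matrix.of_apply, hKraus, Matrix.sum_apply, Matrix.mul_apply,
      Matrix.conjTranspose_apply, Matrix.single, hN, star_star, Finset.mul_sum,
      Finset.sum_mul, mul_ite, ite_mul, mul_zero, zero_mul, mul_one, one_mul]
    try simp only [ite_and, Finset.sum_ite_eq, Finset.sum_ite_eq', Finset.mem_univ, if_true]
    try refine Finset.sum_congr rfl fun k _ => by ring
  have hlow : b ≤ (choi Φ).rank := by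
    have hfac : Mᴴ = N * (Matrix.of fun (p : Fin a × Fin b) (i : Fin b) =>
        if p.2 = i then star (ψ p.1) else 0) := by
      ext k i
      simp only [Matrix.conjTranspose_apply, hM, hN, Matrix.of_apply, Matrix.mul_apply,
        Matrix.mulVec, dotProduct, star_sum, star_mul', Fintype.sum_prod_type,
        mul_ite, mul_zero]
      try simp only [Finset.sum_ite_eq, Finset.sum_ite_eq', Finset.mem_univ, if_true]
      try refine Finset.sum_congr rfl fun s _ => by ring
    calc b = Mᴴ.rank := by rw [Matrix.rank_conjTranspose, hMrank]
    _ ≤ N.rank := by rw [hfac]; exact Matrix.rank_mul_le_left _ _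
    _ = (choi Φ).rank := by rw [hchoi, Matrix.rank_conjTranspose_mul_self]
  have hPsd : (M * Mᴴ).PosSemidef := Matrix.posSemidef_self_mul_conjTranspose M
  obtain ⟨S, hSdec⟩ := (by open scoped MatrixOrder in
    exact CStarAlgebra.nonneg_iff_eq_star_mul_self.mp hPsd.nonneg :
      ∃ S : Matrix (Fin b) (Fin b) ℂ, M * Mᴴ = Sᴴ * S)
  have hSrank : S.rank = b := by
    rw [← Matrix.rank_conjTranspose_mul_self, ← hSdec,
      Matrix.rank_self_mul_conjTranspose, hMrank]
  have hSdet : IsUnit S.det := full_rank_isUnit_det S hSrank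
  have hΦ1 : (Φ 1).PosSemidef := by
    rw [hKraus]
    refine Finset.sum_induction _ _ (fun x y hx hy => hx.add hy) Matrix.PosSemidef.zero
      fun k _ => ?_
    rw [Matrix.mul_one]
    exact Matrix.posSemidef_self_mul_conjTranspose (A k)
  have hcomp1 : Ψ (Φ 1) = complementMap A 1 := by
    have := LinearMap.congr_fun hcomp 1
    simpa using this
  have hcompψ : Ψ (Φ (Matrix.vecMulVec ψ (star ψ))) =
      complementMap A (Matrix.vecMulVec ψ (star ψ)) := by
    have := LinearMap.congr_fun hcomp (Matrix.vecMulVec ψ (star ψ))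
    simpa using this
  have hPsiP : Ψ (Sᴴ * S) = (Mᴴ * M)ᵀ := by
    rw [← hSdec, ← hP, hcompψ]
    ext j k
    simp only [complementMap, LinearMap.coe_mk, AddHom.coe_mk, Matrix.of_apply,
      Matrix.trace, Matrix.diag, Matrix.mul_apply, Matrix.conjTranspose_apply,
      Matrix.vecMulVec_apply, Pi.star_apply, Matrix.transpose_apply, hM,
      Matrix.mulVec, dotProduct, star_sum, star_mul', Finset.sum_mul,
      Finset.mul_sum]
    refine Finset.sum_congr rfl fun i _ => ?_
    rw [Finset.sum_comm]
    refine Finset.sum_congr rfl fun s _ => Finset.sum_congr rfl fun t _ => by ring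
  have hup1 : (Ψ (Φ 1)).rank ≤ (Ψ (Sᴴ * S)).rank :=
    rank_le_of_ker _ _ fun v hv => cs_kernel Ψ hΨ.1 S hSdet hΦ1 hv
  have hr2 : (Ψ (Sᴴ * S)).rank ≤ b := by
    rw [hPsiP, Matrix.rank_transpose, Matrix.rank_conjTranspose_mul_self, hMrank]
  have hNG : N * Nᴴ = ((complementMap A 1)ᵀ)ᴴ := by
    have h1 : ∀ j k : Fin e, (complementMap A) 1 j k = ((A j) * (A k)ᴴ).trace := by
      intro j k
      simp [complementMap, Matrix.mul_one]
    ext j k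
    rw [Matrix.conjTranspose_apply, Matrix.transpose_apply, h1]
    simp only [Matrix.trace, Matrix.diag, Matrix.mul_apply, Matrix.conjTranspose_apply,
      hN, Matrix.of_apply, star_sum, star_mul', star_star, Fintype.sum_prod_type]
    rw [Finset.sum_comm]
  have hupper : (choi Φ).rank ≤ b := by
    calc (choi Φ).rank = N.rank := by rw [hchoi, Matrix.rank_conjTranspose_mul_self]
    _ = (N * Nᴴ).rank := (Matrix.rank_self_mul_conjTranspose N).symm
    _ = (complementMap A 1).rank := by
        rw [hNG, Matrix.rank_conjTranspose, Matrix.rank_transpose]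
    _ = (Ψ (Φ 1)).rank := by rw [hcomp1]
    _ ≤ (Ψ (Sᴴ * S)).rank := hup1
    _ ≤ b := hr2
  omega
end

section
/- Let Φ: M_{d_A} → M_{d_B} be a degradable CPT map with complement Φ^C: M_{d_A} → M_{d_E} (minimal environment). For a pure state |ψ⟩ let B_ψ = range Φ(|ψ⟩⟨ψ|) and E_ψ = range Φ^C(|ψ⟩⟨ψ|). Then dim B_ψ = dim E_ψ; moreover, if pure states |ψ_1⟩,...,|ψ_m⟩ satisfy span(∪_j B_{ψ_j}) = C^{d_B}, then span(∪_j E_{ψ_j}) = C^{d_E}. -/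
open Matrix Kronecker BigOperators ComplexOrder

section Aux
variable {a b e : ℕ}

noncomputable def Wmat (A : Fin e → Matrix (Fin b) (Fin a) ℂ) (ψ : Fin a → ℂ) :
    Matrix (Fin b) (Fin e) ℂ := Matrix.of fun i k => (A k).mulVec ψ i

lemma kraus_pure (A : Fin e → Matrix (Fin b) (Fin a) ℂ) (ψ : Fin a → ℂ) :
    krausMap A (Matrix.vecMulVec ψ (star ψ)) = Wmat A ψ * (Wmat A ψ)ᴴ := by
  show ∑ k, A k * (Matrix.vecMulVec ψ (star ψ)) * (A k)ᴴ = _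
  ext i j
  simp only [Matrix.sum_apply, Matrix.mul_apply, Matrix.vecMulVec_apply, Wmat,
    Matrix.conjTranspose_apply, Matrix.of_apply, Matrix.mulVec, dotProduct,
    Pi.star_apply, star_sum, star_mul', Finset.mul_sum, Finset.sum_mul]
  refine Finset.sum_congr rfl fun k _ => ?_
  refine Finset.sum_congr rfl fun q _ => Finset.sum_congr rfl fun p _ => ?_
  ring

lemma comp_pure (A : Fin e → Matrix (Fin b) (Fin a) ℂ) (ψ : Fin a → ℂ) :
    complementMap A (Matrix.vecMulVec ψ (star ψ)) = ((Wmat A ψ)ᴴ * Wmat A ψ)ᵀ := by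
  show Matrix.of (fun j k => (A j * (Matrix.vecMulVec ψ (star ψ)) * (A k)ᴴ).trace) = _
  ext j k
  simp only [Matrix.of_apply, Matrix.trace, Matrix.diag_apply, Matrix.mul_apply,
    Matrix.vecMulVec_apply, Matrix.transpose_apply, Matrix.conjTranspose_apply, Wmat,
    Matrix.mulVec, dotProduct, Pi.star_apply, star_sum, star_mul',
    Finset.mul_sum, Finset.sum_mul]
  refine Finset.sum_congr rfl fun i _ => ?_
  rw [Finset.sum_comm]
  refine Finset.sum_congr rfl fun q _ => Finset.sum_congr rfl fun p _ => ?_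
  ring

end Aux

section CP
variable {n m : Type*} [Fintype n] [DecidableEq n] [Fintype m]

lemma vecMulVec_eq_sum_std (w : n → ℂ) :
    Matrix.vecMulVec w (star w) = ∑ p, ∑ q, (w p * star (w q)) • Matrix.single p q 1 := by
  ext i j
  simp [Matrix.vecMulVec_apply, Matrix.single, Matrix.sum_apply, Matrix.smul_apply,
    Finset.sum_ite_eq, ite_and]

lemma choi_apply_rankOne (Ψ : Matrix n n ℂ →ₗ[ℂ] Matrix m m ℂ) (w : n → ℂ) (j k : m) :
    Ψ (Matrix.vecMulVec w (star w)) j k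
      = ∑ p, ∑ q, w p * star (w q) * choi Ψ (p, j) (q, k) := by
  rw [vecMulVec_eq_sum_std, map_sum]
  simp only [map_sum, _root_.map_smul, Matrix.sum_apply, Matrix.smul_apply,
    smul_eq_mul, choi, Matrix.of_apply]

lemma choi_psd_rankOne (Ψ : Matrix n n ℂ →ₗ[ℂ] Matrix m m ℂ)
    (hC : (choi Ψ).PosSemidef) (w : n → ℂ) :
    (Ψ (Matrix.vecMulVec w (star w))).PosSemidef := by
  have hherm : ∀ x y, star (choi Ψ x y) = choi Ψ y x := fun x y => by
    have := congrFun (congrFun hC.1 y) x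
    simpa [Matrix.conjTranspose_apply] using this
  refine Matrix.posSemidef_iff_dotProduct_mulVec.mpr ⟨?_, ?_⟩
  · ext j k
    rw [Matrix.conjTranspose_apply, choi_apply_rankOne, choi_apply_rankOne]
    rw [star_sum, Finset.sum_comm]
    refine Finset.sum_congr rfl fun p _ => ?_
    rw [star_sum]
    refine Finset.sum_congr rfl fun q _ => ?_
    rw [star_mul', star_mul', star_star, hherm]
    ring
  · intro x
    have key := hC.dotProduct_mulVec_nonneg (fun pj => star (w pj.1) * x pj.2)
    convert key using 1
    simp only [dotProduct, Matrix.mulVec, Pi.star_apply, Fintype.sum_prod_type,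
      star_mul', star_star]
    rw [Finset.sum_comm]
    simp only [choi_apply_rankOne, Finset.mul_sum, Finset.sum_mul]
    refine Finset.sum_congr rfl fun j _ => ?_
    rw [Finset.sum_comm]
    refine Finset.sum_congr rfl fun p _ => ?_
    rw [Finset.sum_comm]
    refine Finset.sum_congr rfl fun q _ => Finset.sum_congr rfl fun k _ => ?_
    ring
end CP

open scoped MatrixOrder in
lemma psd_exists_ct_mul {n : Type*} [Fintype n] [DecidableEq n] {M : Matrix n n ℂ}
    (h : M.PosSemidef) : ∃ B : Matrix n n ℂ, M = Bᴴ * B := by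
  obtain ⟨B, hB⟩ := CStarAlgebra.nonneg_iff_eq_star_mul_self.mp h.nonneg
  exact ⟨B, hB⟩

section CP2
variable {n m : Type*} [Fintype n] [DecidableEq n] [Fintype m]

lemma choi_psd_apply (Ψ : Matrix n n ℂ →ₗ[ℂ] Matrix m m ℂ)
    (hC : (choi Ψ).PosSemidef) {ρ : Matrix n n ℂ} (hρ : ρ.PosSemidef) :
    (Ψ ρ).PosSemidef := by
  obtain ⟨B, rfl⟩ := psd_exists_ct_mul hρ
  have hdecomp : Bᴴ * B = ∑ i, Matrix.vecMulVec (star (B i)) (star (star (B i))) := by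
    ext p q
    simp [Matrix.mul_apply, Matrix.sum_apply, Matrix.vecMulVec_apply, Matrix.conjTranspose_apply]
  rw [hdecomp, map_sum]
  refine Finset.sum_induction _ _ (fun a b ha hb => ha.add hb) .zero fun i _ => ?_
  exact choi_psd_rankOne Ψ hC (star (B i))

lemma trace_smul_one_sub_psd {M : Matrix n n ℂ} (hM : M.PosSemidef) :
    (M.trace • (1 : Matrix n n ℂ) - M).PosSemidef := by
  obtain ⟨B, rfl⟩ := psd_exists_ct_mul hM
  have htr : star (Bᴴ * B).trace = (Bᴴ * B).trace := by
    rw [← Matrix.trace_conjTranspose, Matrix.conjTranspose_mul,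
      Matrix.conjTranspose_conjTranspose]
  refine Matrix.posSemidef_iff_dotProduct_mulVec.mpr ⟨?_, ?_⟩
  · have h1 : (Bᴴ * B).IsHermitian := Matrix.isHermitian_conjTranspose_mul_self B
    unfold Matrix.IsHermitian
    rw [Matrix.conjTranspose_sub, Matrix.conjTranspose_smul, Matrix.conjTranspose_one, h1, htr]
  · intro x
    rw [Matrix.sub_mulVec, dotProduct_sub, Matrix.smul_mulVec,
      Matrix.one_mulVec, dotProduct_smul]
    have hxMx : star x ⬝ᵥ (Bᴴ * B) *ᵥ x = star (B *ᵥ x) ⬝ᵥ (B *ᵥ x) := by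
      rw [← Matrix.mulVec_mulVec, Matrix.dotProduct_mulVec, Matrix.vecMul_conjTranspose,
        star_star]
    rw [hxMx]
    have hself : ∀ (v : n → ℂ),
        star v ⬝ᵥ v = ((∑ i, Complex.normSq (v i) : ℝ) : ℂ) := by
      intro v
      push_cast
      refine Finset.sum_congr rfl fun i _ => ?_
      simp [dotProduct, Complex.normSq_eq_conj_mul_self]
    have htr2 : (Bᴴ * B).trace = ((∑ i, ∑ p, Complex.normSq (B i p) : ℝ) : ℂ) := by
      have h3 : (Bᴴ * B).trace = ∑ p, ∑ i, star (B i p) * B i p := by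
        simp [Matrix.trace, Matrix.mul_apply, Matrix.conjTranspose_apply, Matrix.diag]
      rw [h3, Finset.sum_comm]
      push_cast
      refine Finset.sum_congr rfl fun i _ => Finset.sum_congr rfl fun p _ => ?_
      simp [Complex.normSq_eq_conj_mul_self]
    rw [hself x, hself (B *ᵥ x), htr2, smul_eq_mul, ← Complex.ofReal_mul, ← Complex.ofReal_sub,
      Complex.zero_le_real, sub_nonneg]
    calc ∑ i, Complex.normSq ((B *ᵥ x) i)
        ≤ ∑ i, (∑ p, Complex.normSq (B i p)) * (∑ p, Complex.normSq (x p)) := by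
          refine Finset.sum_le_sum fun i _ => ?_
          have h0 : (B *ᵥ x) i = ∑ p, B i p * x p := rfl
          have h1 : ‖∑ p, B i p * x p‖
              ≤ ∑ p, ‖B i p‖ * ‖x p‖ := by
            refine (norm_sum_le _ _).trans (le_of_eq ?_)
            exact Finset.sum_congr rfl fun p _ => norm_mul _ _
          have h2 := Finset.sum_mul_sq_le_sq_mul_sq Finset.univ
            (fun p => ‖B i p‖) (fun p => ‖x p‖)
          rw [h0, Complex.normSq_eq_norm_sq]
          calc ‖∑ p, B i p * x p‖ ^ 2
              ≤ (∑ p, ‖B i p‖ * ‖x p‖) ^ 2 := by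
                exact pow_le_pow_left₀ (norm_nonneg _) h1 2
            _ ≤ (∑ p, ‖B i p‖ ^ 2) * (∑ p, ‖x p‖ ^ 2) := h2
            _ = (∑ p, Complex.normSq (B i p)) * (∑ p, Complex.normSq (x p)) := by
                simp [Complex.sq_norm]
      _ = (∑ i, ∑ p, Complex.normSq (B i p)) * (∑ p, Complex.normSq (x p)) := by
          rw [Finset.sum_mul]
end CP2

section CP3
variable {n : Type*} [Fintype n] [DecidableEq n]

lemma exists_smul_sub_psd {Q P : Matrix n n ℂ} (hQ : Q.PosDef) (hP : P.PosSemidef) :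
    ∃ γ : ℂ, (γ • Q - P).PosSemidef := by
  obtain ⟨R, hR⟩ := psd_exists_ct_mul hQ.posSemidef
  have hRdet : IsUnit R.det := by
    have h1 : IsUnit Q.det := hQ.isUnit.map (Matrix.detMonoidHom)
    rw [hR, Matrix.det_mul] at h1
    exact isUnit_of_mul_isUnit_right h1
  have hM : ((R⁻¹)ᴴ * P * R⁻¹).PosSemidef := hP.conjTranspose_mul_mul_same R⁻¹
  refine ⟨((R⁻¹)ᴴ * P * R⁻¹).trace, ?_⟩
  have h2 := (trace_smul_one_sub_psd hM).mul_mul_conjTranspose_same Rᴴ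
  have h3 : Rᴴ * (((R⁻¹)ᴴ * P * R⁻¹).trace • (1 : Matrix n n ℂ) - (R⁻¹)ᴴ * P * R⁻¹) * (Rᴴ)ᴴ
      = ((R⁻¹)ᴴ * P * R⁻¹).trace • Q - P := by
    rw [Matrix.conjTranspose_conjTranspose, Matrix.mul_sub, Matrix.sub_mul]
    congr 1
    · rw [Matrix.mul_smul, Matrix.smul_mul, Matrix.mul_one, hR]
    · calc Rᴴ * ((R⁻¹)ᴴ * P * R⁻¹) * R
          = (R⁻¹ * R)ᴴ * P * (R⁻¹ * R) := by
            rw [Matrix.conjTranspose_mul]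
            noncomm_ring
        _ = P := by rw [Matrix.nonsing_inv_mul _ hRdet]; simp
  rwa [h3] at h2

end CP3

section MoreAux
variable {a b e : ℕ}

noncomputable def Tmat (A : Fin e → Matrix (Fin b) (Fin a) ℂ) :
    Matrix (Fin b × Fin a) (Fin e) ℂ := Matrix.of fun ip k => star (A k ip.1 ip.2)

lemma comp_one (A : Fin e → Matrix (Fin b) (Fin a) ℂ) :
    complementMap A 1 = (Tmat A)ᴴ * Tmat A := by
  have h : complementMap A (1 : Matrix (Fin a) (Fin a) ℂ)
      = Matrix.of fun j k => (A j * (1 : Matrix (Fin a) (Fin a) ℂ) * (A k)ᴴ).trace := rfl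
  rw [h]
  ext j k
  simp only [Matrix.of_apply, Matrix.mul_one, Matrix.trace, Matrix.diag_apply,
    Matrix.mul_apply, Matrix.conjTranspose_apply, Tmat, Fintype.sum_prod_type, star_star]

lemma psd_sum {d ι : Type*} [Fintype d] [Fintype ι] (f : ι → Matrix d d ℂ)
    (h : ∀ i, (f i).PosSemidef) : (∑ i, f i).PosSemidef :=
  Finset.sum_induction f _ (fun _ _ ha hb => ha.add hb) .zero (fun i _ => h i)

lemma sum_mulVec {d ι : Type*} [Fintype d] [Fintype ι] (f : ι → Matrix d d ℂ) (v : d → ℂ) :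
    (∑ i, f i) *ᵥ v = ∑ i, (f i) *ᵥ v := by
  ext i0
  simp only [Matrix.mulVec, dotProduct, Matrix.sum_apply, Finset.sum_apply,
    Finset.sum_mul]
  rw [Finset.sum_comm]

lemma forall_mulVec_zero_eq_zero {d : ℕ} {ι : Type*} [Fintype ι]
    (P : ι → Matrix (Fin d) (Fin d) ℂ) (hP : ∀ j, (P j).IsHermitian)
    (hsup : (⨆ j, LinearMap.range (P j).mulVecLin) = ⊤)
    (x : Fin d → ℂ) (hx : ∀ j, (P j) *ᵥ x = 0) : x = 0 := by
  let φ : (Fin d → ℂ) →ₗ[ℂ] ℂ :=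
    { toFun := fun y => star x ⬝ᵥ y
      map_add' := fun y z => dotProduct_add _ _ _
      map_smul' := fun c y => by simp [dotProduct_smul] }
  have hle : ∀ j, LinearMap.range (P j).mulVecLin ≤ LinearMap.ker φ := by
    intro j z hz
    obtain ⟨y, rfl⟩ := hz
    have h1 : star x ᵥ* P j = 0 := by
      have h2 := Matrix.star_mulVec (M := (P j)ᴴ) (v := x)
      rw [Matrix.conjTranspose_conjTranspose, (hP j).eq, hx j, star_zero] at h2
      exact h2.symm
    have : star x ⬝ᵥ (P j) *ᵥ y = 0 := by
      rw [Matrix.dotProduct_mulVec, h1, zero_dotProduct]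
    simpa [φ, LinearMap.mem_ker, Matrix.mulVecLin_apply] using this
  have htop : (⊤ : Submodule ℂ (Fin d → ℂ)) ≤ LinearMap.ker φ := hsup ▸ iSup_le hle
  have hxx := htop (Submodule.mem_top : x ∈ (⊤ : Submodule ℂ (Fin d → ℂ)))
  simp only [LinearMap.mem_ker, φ, LinearMap.coe_mk, AddHom.coe_mk] at hxx
  exact dotProduct_star_self_eq_zero.mp hxx

lemma top_le_iSup_range {d : ℕ} {ι : Type*} [Fintype ι]
    (G : ι → Matrix (Fin d) (Fin d) ℂ) {S : Matrix (Fin d) (Fin d) ℂ}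
    (hS : S = ∑ j, G j) (hunit : IsUnit S) :
    (⨆ j, LinearMap.range (G j).mulVecLin) = ⊤ := by
  rw [eq_top_iff]
  intro x _
  have hdet : IsUnit S.det := (Matrix.isUnit_iff_isUnit_det S).mp hunit
  have hx : x = ∑ j, (G j) *ᵥ (S⁻¹ *ᵥ x) := by
    rw [← _root_.sum_mulVec, ← hS, Matrix.mulVec_mulVec, Matrix.mul_nonsing_inv _ hdet,
      Matrix.one_mulVec]
  rw [hx]
  exact Submodule.sum_mem _ fun j _ =>
    Submodule.mem_iSup_of_mem j ⟨S⁻¹ *ᵥ x, rfl⟩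

end MoreAux

/-- for a degradable channel (with a minimal Kraus representation `A`),
for each pure input the ranks of the channel output and the complementary output agree,
and if finitely many pure inputs have outputs whose ranges span the output space,
then the corresponding complementary outputs have ranges spanning the environment. -/
theorem degradable_range_lemma {a b e : ℕ}
    (A : Fin e → Matrix (Fin b) (Fin a) ℂ)
    (hTP : ∑ k, (A k)ᴴ * A k = 1)
    (hmin : LinearIndependent ℂ A)
    (hdeg : ∃ Ψ : Matrix (Fin b) (Fin b) ℂ →ₗ[ℂ] Matrix (Fin e) (Fin e) ℂ,
      IsCPTP Ψ ∧ Ψ ∘ₗ krausMap A = complementMap A) :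
    (∀ ψ : Fin a → ℂ, star ψ ⬝ᵥ ψ = 1 →
      (krausMap A (Matrix.vecMulVec ψ (star ψ))).rank
        = (complementMap A (Matrix.vecMulVec ψ (star ψ))).rank) ∧
    (∀ (m : ℕ) (ψ : Fin m → Fin a → ℂ), (∀ j, star (ψ j) ⬝ᵥ ψ j = 1) →
      (⨆ j, LinearMap.range
        (krausMap A (Matrix.vecMulVec (ψ j) (star (ψ j)))).mulVecLin) = ⊤ →
      (⨆ j, LinearMap.range
        (complementMap A (Matrix.vecMulVec (ψ j) (star (ψ j)))).mulVecLin) = ⊤) := by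
  obtain ⟨Ψ, hΨcptp, hΨ⟩ := hdeg
  constructor
  · intro ψ _
    rw [kraus_pure, comp_pure, Matrix.rank_transpose, Matrix.rank_self_mul_conjTranspose,
      Matrix.rank_conjTranspose_mul_self]
  · intro m ψ _ hsup
    set σ : Matrix (Fin a) (Fin a) ℂ := ∑ j, Matrix.vecMulVec (ψ j) (star (ψ j)) with hσ
    have hPpsd : ∀ j, (krausMap A (Matrix.vecMulVec (ψ j) (star (ψ j)))).PosSemidef := by
      intro j; rw [kraus_pure]; exact Matrix.posSemidef_self_mul_conjTranspose _
    have hGpsd : ∀ j, (complementMap A (Matrix.vecMulVec (ψ j) (star (ψ j)))).PosSemidef := by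
      intro j; rw [comp_pure]; exact (Matrix.posSemidef_conjTranspose_mul_self _).transpose
    have hQsum : krausMap A σ = ∑ j, krausMap A (Matrix.vecMulVec (ψ j) (star (ψ j))) :=
      map_sum (krausMap A) _ _
    have hQpsd : (krausMap A σ).PosSemidef := by
      rw [hQsum]; exact psd_sum _ hPpsd
    have hQdef : (krausMap A σ).PosDef := by
      refine Matrix.PosDef.of_dotProduct_mulVec_pos hQpsd.1 fun x hx => ?_
      refine lt_of_le_of_ne (hQpsd.dotProduct_mulVec_nonneg x) (Ne.symm fun h0 => hx ?_)
      have hsplit : star x ⬝ᵥ (krausMap A σ) *ᵥ x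
          = ∑ j, star x ⬝ᵥ (krausMap A (Matrix.vecMulVec (ψ j) (star (ψ j)))) *ᵥ x := by
        rw [hQsum, _root_.sum_mulVec]
        simp only [dotProduct, Finset.sum_apply, Finset.mul_sum]
        rw [Finset.sum_comm]
      rw [hsplit] at h0
      have hterm : ∀ j ∈ Finset.univ,
          star x ⬝ᵥ (krausMap A (Matrix.vecMulVec (ψ j) (star (ψ j)))) *ᵥ x = 0 :=
        (Finset.sum_eq_zero_iff_of_nonneg (fun j _ => (hPpsd j).dotProduct_mulVec_nonneg x)).mp h0
      have hvec : ∀ j, (krausMap A (Matrix.vecMulVec (ψ j) (star (ψ j)))) *ᵥ x = 0 := fun j =>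
        ((hPpsd j).dotProduct_mulVec_zero_iff x).mp (hterm j (Finset.mem_univ j))
      exact forall_mulVec_zero_eq_zero _ (fun j => (hPpsd j).1) hsup x hvec
    have hK1psd : (krausMap A (1 : Matrix (Fin a) (Fin a) ℂ)).PosSemidef := by
      have h : krausMap A (1 : Matrix (Fin a) (Fin a) ℂ)
          = ∑ k, A k * (1 : Matrix (Fin a) (Fin a) ℂ) * (A k)ᴴ := rfl
      rw [h]
      exact psd_sum _ fun k => Matrix.PosSemidef.one.mul_mul_conjTranspose_same (A k)
    obtain ⟨γ, hγ⟩ := exists_smul_sub_psd hQdef hK1psd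
    have h5 : (Ψ (γ • krausMap A σ - krausMap A (1 : Matrix (Fin a) (Fin a) ℂ))).PosSemidef :=
      choi_psd_apply Ψ hΨcptp.1 hγ
    rw [map_sub, _root_.map_smul] at h5
    have hc1 : Ψ (krausMap A σ) = complementMap A σ := LinearMap.congr_fun hΨ σ
    have hc2 : Ψ (krausMap A (1 : Matrix (Fin a) (Fin a) ℂ))
        = complementMap A (1 : Matrix (Fin a) (Fin a) ℂ) := LinearMap.congr_fun hΨ 1
    rw [hc1, hc2] at h5
    have hGsum : complementMap A σ = ∑ j, complementMap A (Matrix.vecMulVec (ψ j) (star (ψ j))) :=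
      map_sum (complementMap A) _ _
    have hGpsd' : (complementMap A σ).PosSemidef := by
      rw [hGsum]; exact psd_sum _ hGpsd
    have hG1psd : (complementMap A (1 : Matrix (Fin a) (Fin a) ℂ)).PosSemidef := by
      rw [comp_one]; exact Matrix.posSemidef_conjTranspose_mul_self _
    have hGdef : (complementMap A σ).PosDef := by
      refine Matrix.PosDef.of_dotProduct_mulVec_pos hGpsd'.1 fun x hx => ?_
      refine lt_of_le_of_ne (hGpsd'.dotProduct_mulVec_nonneg x) (Ne.symm fun h0 => hx ?_)
      have h6 := h5.dotProduct_mulVec_nonneg x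
      rw [Matrix.sub_mulVec, dotProduct_sub, Matrix.smul_mulVec,
        dotProduct_smul, h0, smul_zero, zero_sub] at h6
      have hq0 : star x ⬝ᵥ (complementMap A (1 : Matrix (Fin a) (Fin a) ℂ)) *ᵥ x = 0 :=
        le_antisymm (by simpa using neg_nonneg.mp (by simpa using h6)) (hG1psd.dotProduct_mulVec_nonneg x)
      rw [comp_one, ← Matrix.mulVec_mulVec, Matrix.dotProduct_mulVec,
        Matrix.vecMul_conjTranspose, star_star, dotProduct_star_self_eq_zero] at hq0
      have hzero : ∑ k, star (x k) • A k = 0 := by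
        ext i p
        have h7 := congrFun hq0 (i, p)
        have h8 : ∑ k, star (A k i p) * x k = 0 := by
          simpa [Tmat, Matrix.mulVec, dotProduct] using h7
        have h9 := congrArg star h8
        simpa [star_sum, Matrix.sum_apply, Matrix.smul_apply, smul_eq_mul, mul_comm] using h9
      have hcoef := Fintype.linearIndependent_iff.mp hmin (fun k => star (x k)) hzero
      funext k
      have := congrArg star (hcoef k)
      simpa using this
    exact top_le_iSup_range _ hGsum hGdef.isUnit
end

section
/- If Φ: M_{d_A} → M_3 is a degradable CPT map with qutrit output, then its Choi rank is at most 3. -/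
open Matrix Kronecker BigOperators ComplexOrder

section Part1
open Matrix BigOperators ComplexOrder
namespace DegQ

variable {a e : ℕ} (A : Fin e → Matrix (Fin 3) (Fin a) ℂ)

/-- the 3×e matrix whose j-th column is `A j *ᵥ c`. -/
noncomputable def Mc (c : Fin a → ℂ) : Matrix (Fin 3) (Fin e) ℂ :=
  Matrix.of fun b j => (A j).mulVec c b

/-- stacked matrix whose rank is the Choi rank. -/
noncomputable def BIG : Matrix (Fin a × Fin 3) (Fin e) ℂ :=
  Matrix.of fun pb j => A j pb.2 pb.1

/-- rank-one matrix x yᴴ -/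
noncomputable def outer {n : Type*} [Fintype n] (x y : n → ℂ) : Matrix n n ℂ :=
  Matrix.of fun i j => x i * star (y j)

lemma Mc_apply (c : Fin a → ℂ) (b : Fin 3) (j : Fin e) :
    Mc A c b j = (A j).mulVec c b := rfl

lemma Mc_add (c c' : Fin a → ℂ) : Mc A (c + c') = Mc A c + Mc A c' := by
  ext b j; simp [Mc, Matrix.mulVec_add]

lemma Mc_single (p : Fin a) (b : Fin 3) (j : Fin e) :
    Mc A (Pi.single p 1) b j = A j b p := by
  simp [Mc, Matrix.mulVec, dotProduct, Pi.single_apply]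

lemma BIG_eq_Mc (p : Fin a) (b : Fin 3) (j : Fin e) :
    BIG A (p, b) j = Mc A (Pi.single p 1) b j := by
  rw [Mc_single]; rfl

lemma BIG_mulVec (z : Fin e → ℂ) (p : Fin a) (b : Fin 3) :
    (BIG A *ᵥ z) (p, b) = (Mc A (Pi.single p 1) *ᵥ z) b := by
  simp only [Matrix.mulVec, dotProduct]
  exact Finset.sum_congr rfl fun j _ => by rw [BIG_eq_Mc]

/-- sandwich of a standard basis matrix. -/
lemma sandwich (B C : Matrix (Fin 3) (Fin a) ℂ) (p q : Fin a) (b c : Fin 3) :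
    (B * Matrix.single p q (1:ℂ) * Cᴴ) b c = B b p * star (C c q) := by
  simp only [Matrix.mul_apply, Matrix.single, Matrix.conjTranspose_apply,
    Matrix.of_apply, ite_and, mul_ite, ite_mul, mul_one, mul_zero, zero_mul, one_mul]
  simp [Finset.sum_ite_eq, Finset.mul_sum]

/-- choi of a Kraus channel equals BIG * BIGᴴ. -/
lemma choi_eq_BIG (Φ : Matrix (Fin a) (Fin a) ℂ →ₗ[ℂ] Matrix (Fin 3) (Fin 3) ℂ)
    (hKraus : ∀ ρ, Φ ρ = ∑ k, A k * ρ * (A k)ᴴ) :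
    choi Φ = BIG A * (BIG A)ᴴ := by
  ext ⟨p, b⟩ ⟨q, c⟩
  show Φ (Matrix.single p q 1) b c = _
  rw [hKraus]
  simp only [Matrix.sum_apply, sandwich]
  rw [Matrix.mul_apply]
  exact Finset.sum_congr rfl fun k _ => rfl

end DegQ
end Part1

section Part2

open Matrix BigOperators ComplexOrder

namespace DegQ

variable {a e : ℕ} (A : Fin e → Matrix (Fin 3) (Fin a) ℂ)

lemma std_smul {n m : Type*} [DecidableEq n] [DecidableEq m] (i : n) (j : m) (v : ℂ) :
    Matrix.single i j v = v • Matrix.single i j (1:ℂ) := by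
  rw [Matrix.smul_single]
  simp

/-- entries of a linear map on matrices through its Choi matrix. -/
lemma psi_entry (Ψ : Matrix (Fin 3) (Fin 3) ℂ →ₗ[ℂ] Matrix (Fin e) (Fin e) ℂ)
    (Y : Matrix (Fin 3) (Fin 3) ℂ) (k j : Fin e) :
    Ψ Y k j = ∑ b, ∑ c, Y b c * choi Ψ (b, k) (c, j) := by
  conv_lhs => rw [Matrix.matrix_eq_sum_single Y]
  rw [map_sum, Matrix.sum_apply]
  refine Finset.sum_congr rfl fun b _ => ?_
  rw [map_sum, Matrix.sum_apply]
  refine Finset.sum_congr rfl fun c _ => ?_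
  rw [std_smul, LinearMap.map_smul, Matrix.smul_apply, smul_eq_mul]
  rfl

lemma sum4_reorder {α : Type*} [AddCommMonoid α] {e : ℕ}
    (f : Fin 3 → Fin e → Fin 3 → Fin e → α) :
    ∑ k, ∑ j, ∑ b, ∑ c, f b k c j = ∑ b, ∑ k, ∑ c, ∑ j, f b k c j :=
  calc ∑ k, ∑ j, ∑ b, ∑ c, f b k c j
      = ∑ k, ∑ b, ∑ j, ∑ c, f b k c j :=
        Finset.sum_congr rfl fun k _ => Finset.sum_comm
    _ = ∑ b, ∑ k, ∑ j, ∑ c, f b k c j := Finset.sum_comm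
    _ = ∑ b, ∑ k, ∑ c, ∑ j, f b k c j :=
        Finset.sum_congr rfl fun b _ => Finset.sum_congr rfl fun k _ => Finset.sum_comm

/-- The quadratic form of `Ψ (outer x x)` equals the Choi quadratic form at a product vector. -/
lemma quad_psi_outer (Ψ : Matrix (Fin 3) (Fin 3) ℂ →ₗ[ℂ] Matrix (Fin e) (Fin e) ℂ)
    (x : Fin 3 → ℂ) (ζ : Fin e → ℂ) :
    star ζ ⬝ᵥ (Ψ (outer x x)) *ᵥ ζ =
      star (fun bk : Fin 3 × Fin e => star (x bk.1) * ζ bk.2) ⬝ᵥ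
        (choi Ψ) *ᵥ (fun bk : Fin 3 × Fin e => star (x bk.1) * ζ bk.2) := by
  have hL : star ζ ⬝ᵥ (Ψ (outer x x)) *ᵥ ζ =
      ∑ k, ∑ j, ∑ b, ∑ c,
        x b * star (x c) * star (ζ k) * ζ j * choi Ψ (b, k) (c, j) := by
    simp only [dotProduct, Matrix.mulVec, Pi.star_apply]
    refine Finset.sum_congr rfl fun k _ => ?_
    rw [Finset.mul_sum]
    refine Finset.sum_congr rfl fun j _ => ?_
    rw [psi_entry]
    simp only [outer, Matrix.of_apply, Finset.mul_sum, Finset.sum_mul]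
    refine Finset.sum_congr rfl fun b _ => Finset.sum_congr rfl fun c _ => by ring
  have hR : (star (fun bk : Fin 3 × Fin e => star (x bk.1) * ζ bk.2) ⬝ᵥ
        (choi Ψ) *ᵥ (fun bk : Fin 3 × Fin e => star (x bk.1) * ζ bk.2)) =
      ∑ b, ∑ k, ∑ c, ∑ j,
        x b * star (x c) * star (ζ k) * ζ j * choi Ψ (b, k) (c, j) := by
    simp only [dotProduct, Matrix.mulVec, Pi.star_apply]
    rw [Fintype.sum_prod_type]
    refine Finset.sum_congr rfl fun b _ => Finset.sum_congr rfl fun k _ => ?_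
    rw [Fintype.sum_prod_type, Finset.mul_sum]
    refine Finset.sum_congr rfl fun c _ => ?_
    rw [Finset.mul_sum]
    refine Finset.sum_congr rfl fun j _ => by
      simp only [star_mul', star_star]
      ring
  rw [hL, hR, sum4_reorder]

/-- sandwich of outer: `B (x yᴴ) Cᴴ = (Bx)(Cy)ᴴ`. -/
lemma sandwich_outer (B C : Matrix (Fin 3) (Fin a) ℂ) (u u' : Fin a → ℂ) :
    B * outer u u' * Cᴴ = outer (B *ᵥ u) (C *ᵥ u') := by
  ext b c
  simp only [outer, Matrix.mul_apply, Matrix.of_apply, Matrix.conjTranspose_apply,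
    Matrix.mulVec, dotProduct]
  rw [star_sum, Finset.sum_mul_sum]
  rw [Finset.sum_comm]
  refine Finset.sum_congr rfl fun s _ => ?_
  rw [Finset.sum_mul]
  refine Finset.sum_congr rfl fun r _ => by
    simp only [star_mul']
    ring

/-- Φ of an outer input decomposes into columns outer products. -/
lemma phi_outer (Φ : Matrix (Fin a) (Fin a) ℂ →ₗ[ℂ] Matrix (Fin 3) (Fin 3) ℂ)
    (hKraus : ∀ ρ, Φ ρ = ∑ k, A k * ρ * (A k)ᴴ) (c : Fin a → ℂ) :
    Φ (outer c c) = ∑ j, outer ((A j) *ᵥ c) ((A j) *ᵥ c) := by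
  rw [hKraus]
  exact Finset.sum_congr rfl fun j _ => sandwich_outer (A j) (A j) c c

/-- quadratic form of the complement map at an outer input. -/
lemma quad_complement (c : Fin a → ℂ) (z : Fin e → ℂ) :
    star (star z) ⬝ᵥ (complementMap A (outer c c)) *ᵥ (star z) =
      (Mc A c *ᵥ z) ⬝ᵥ star (Mc A c *ᵥ z) := by
  have hent : ∀ k j : Fin e, complementMap A (outer c c) k j =
      ∑ b, ((A k) *ᵥ c) b * star (((A j) *ᵥ c) b) := by
    intro k j
    show (A k * outer c c * (A j)ᴴ).trace = _
    rw [sandwich_outer]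
    simp [Matrix.trace, Matrix.diag, outer]
  simp only [dotProduct, Matrix.mulVec, Pi.star_apply, star_star]
  have key : ∀ k, ∑ j, complementMap A (outer c c) k j * (star z) j =
      ∑ b, ((A k) *ᵥ c) b * star (∑ j, z j * ((A j) *ᵥ c) b) := by
    intro k
    simp only [hent, star_sum, Finset.mul_sum, Finset.sum_mul, Pi.star_apply]
    rw [Finset.sum_comm]
    exact Finset.sum_congr rfl fun b _ => Finset.sum_congr rfl fun j _ => by
      simp only [star_mul']; ring
  calc ∑ k, z k * ∑ j, complementMap A (outer c c) k j * (star z) j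
      = ∑ k, ∑ b, z k * (((A k) *ᵥ c) b * star (∑ j, z j * ((A j) *ᵥ c) b)) := by
        refine Finset.sum_congr rfl fun k _ => ?_
        rw [key k, Finset.mul_sum]
    _ = ∑ b, (∑ k, z k * ((A k) *ᵥ c) b) * star (∑ j, z j * ((A j) *ᵥ c) b) := by
        rw [Finset.sum_comm]
        refine Finset.sum_congr rfl fun b _ => ?_
        rw [Finset.sum_mul]
        exact Finset.sum_congr rfl fun k _ => by ring
    _ = ∑ b, (Mc A c *ᵥ z) b * star ((Mc A c *ᵥ z) b) := by
        refine Finset.sum_congr rfl fun b _ => ?_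
        have h2 : (Mc A c *ᵥ z) b = ∑ k, z k * ((A k) *ᵥ c) b := by
          simp only [Matrix.mulVec, dotProduct, Mc, Matrix.of_apply]
          exact Finset.sum_congr rfl fun k _ => mul_comm _ _
        rw [h2]

end DegQ
end Part2

section Part3
open Matrix BigOperators ComplexOrder

namespace DegQ

lemma sum_mulVec' {ι m n : Type*} [Fintype n] (s : Finset ι)
    (Y : ι → Matrix m n ℂ) (v : n → ℂ) :
    (∑ j ∈ s, Y j) *ᵥ v = ∑ j ∈ s, Y j *ᵥ v := by
  funext i
  rw [Finset.sum_apply]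
  simp only [Matrix.mulVec, dotProduct, Matrix.sum_apply, Finset.sum_mul]
  exact Finset.sum_comm

lemma dotProduct_sum' {ι n : Type*} [Fintype n] (s : Finset ι)
    (u : n → ℂ) (w : ι → n → ℂ) :
    u ⬝ᵥ (∑ j ∈ s, w j) = ∑ j ∈ s, u ⬝ᵥ w j := by
  simp only [dotProduct, Finset.sum_apply, Finset.mul_sum]
  exact Finset.sum_comm

lemma mulVec_sum_vec {ι m n : Type*} [Fintype n] (s : Finset ι)
    (M : Matrix m n ℂ) (v : ι → n → ℂ) :
    M *ᵥ (∑ j ∈ s, v j) = ∑ j ∈ s, M *ᵥ v j := by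
  funext i
  rw [Finset.sum_apply]
  simp only [Matrix.mulVec, dotProduct, Finset.sum_apply, Finset.mul_sum]
  exact Finset.sum_comm

variable {a e : ℕ} (A : Fin e → Matrix (Fin 3) (Fin a) ℂ)

theorem main_contra
    (Φ : Matrix (Fin a) (Fin a) ℂ →ₗ[ℂ] Matrix (Fin 3) (Fin 3) ℂ)
    (hKraus : ∀ ρ, Φ ρ = ∑ k, A k * ρ * (A k)ᴴ)
    (Ψ : Matrix (Fin 3) (Fin 3) ℂ →ₗ[ℂ] Matrix (Fin e) (Fin e) ℂ)
    (hH : (choi Ψ).PosSemidef)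
    (hcomp : Ψ ∘ₗ Φ = complementMap A)
    (c c' : Fin a → ℂ) (z : Fin e → ℂ)
    (hzc : Mc A c *ᵥ z = 0) (hzc' : Mc A c' *ᵥ z = 0)
    (hcov : ∀ p, LinearMap.range (Mc A (Pi.single p 1)).mulVecLin ≤
        LinearMap.range (Mc A c).mulVecLin ⊔ LinearMap.range (Mc A c').mulVecLin)
    (p₀ : Fin a) (hp₀ : Mc A (Pi.single p₀ 1) *ᵥ z ≠ 0) : False := by
  classical
  set ζ : Fin e → ℂ := star z with hζ
  set T : (Fin 3 → ℂ) →ₗ[ℂ] (Fin 3 × Fin e → ℂ) :=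
    { toFun := fun y => fun bk => y bk.1 * ζ bk.2
      map_add' := fun y y' => by funext bk; simp [add_mul]
      map_smul' := fun s y => by funext bk; simp [mul_assoc] } with hT
  have hwT : ∀ x : Fin 3 → ℂ,
      (fun bk : Fin 3 × Fin e => star (x bk.1) * ζ bk.2) = T (star x) := by
    intro x; funext bk; rfl
  -- the key identity
  have key : ∀ u : Fin a → ℂ,
      ∑ j, (star (T (star ((A j) *ᵥ u))) ⬝ᵥ (choi Ψ) *ᵥ (T (star ((A j) *ᵥ u)))) =
        (Mc A u *ᵥ z) ⬝ᵥ star (Mc A u *ᵥ z) := by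
    intro u
    have h1 : ∀ j : Fin e,
        (star (T (star ((A j) *ᵥ u))) ⬝ᵥ (choi Ψ) *ᵥ (T (star ((A j) *ᵥ u)))) =
          star ζ ⬝ᵥ (Ψ (outer ((A j) *ᵥ u) ((A j) *ᵥ u))) *ᵥ ζ := by
      intro j
      rw [← hwT]
      exact (quad_psi_outer Ψ ((A j) *ᵥ u) ζ).symm
    calc ∑ j, (star (T (star ((A j) *ᵥ u))) ⬝ᵥ (choi Ψ) *ᵥ (T (star ((A j) *ᵥ u))))
        = ∑ j, star ζ ⬝ᵥ (Ψ (outer ((A j) *ᵥ u) ((A j) *ᵥ u))) *ᵥ ζ :=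
          Finset.sum_congr rfl fun j _ => h1 j
      _ = star ζ ⬝ᵥ (∑ j, Ψ (outer ((A j) *ᵥ u) ((A j) *ᵥ u))) *ᵥ ζ := by
          rw [← dotProduct_sum', ← sum_mulVec']
      _ = star ζ ⬝ᵥ (Ψ (Φ (outer u u))) *ᵥ ζ := by
          rw [← map_sum, ← phi_outer A Φ hKraus u]
      _ = star ζ ⬝ᵥ (complementMap A (outer u u)) *ᵥ ζ := by
          have h2 := congrArg (fun (f : Matrix (Fin a) (Fin a) ℂ →ₗ[ℂ]
            Matrix (Fin e) (Fin e) ℂ) => f (outer u u)) hcomp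
          simp only [LinearMap.comp_apply] at h2
          rw [h2]
      _ = (Mc A u *ᵥ z) ⬝ᵥ star (Mc A u *ᵥ z) := by
          rw [hζ]; exact quad_complement A u z
  -- vanishing of the PSD form on columns of Mc c and Mc c'
  have qzero : ∀ (u : Fin a → ℂ), Mc A u *ᵥ z = 0 →
      ∀ j, (choi Ψ) *ᵥ (T (star ((A j) *ᵥ u))) = 0 := by
    intro u hu j
    have hsum : ∑ j, (star (T (star ((A j) *ᵥ u))) ⬝ᵥ
        (choi Ψ) *ᵥ (T (star ((A j) *ᵥ u)))) = 0 := by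
      rw [key u, hu]
      simp
    have hnn : ∀ j ∈ Finset.univ, (0:ℂ) ≤
        (star (T (star ((A j) *ᵥ u))) ⬝ᵥ (choi Ψ) *ᵥ (T (star ((A j) *ᵥ u)))) :=
      fun j _ => hH.dotProduct_mulVec_nonneg _
    have h0 := (Finset.sum_eq_zero_iff_of_nonneg hnn).mp hsum j (Finset.mem_univ j)
    exact (hH.dotProduct_mulVec_zero_iff _).mp h0
  -- closure of the vanishing predicate over the covering submodule
  have Prange : ∀ (u : Fin a → ℂ), Mc A u *ᵥ z = 0 → ∀ (v : Fin e → ℂ),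
      (choi Ψ) *ᵥ (T (star (Mc A u *ᵥ v))) = 0 := by
    intro u hu v
    have hdecomp : star (Mc A u *ᵥ v) = ∑ j, star (v j) • star ((A j) *ᵥ u) := by
      funext b
      simp only [Matrix.mulVec, dotProduct, Mc, Matrix.of_apply, Pi.star_apply,
        star_sum, star_mul', Finset.sum_apply, Pi.smul_apply, smul_eq_mul]
      exact Finset.sum_congr rfl fun j _ => mul_comm _ _
    rw [hdecomp, map_sum, mulVec_sum_vec]
    refine Finset.sum_eq_zero fun j _ => ?_
    rw [LinearMap.map_smul, Matrix.mulVec_smul, qzero u hu j, smul_zero]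
  have Pmem : ∀ x : Fin 3 → ℂ,
      x ∈ LinearMap.range (Mc A c).mulVecLin ⊔ LinearMap.range (Mc A c').mulVecLin →
      (choi Ψ) *ᵥ (T (star x)) = 0 := by
    intro x hx
    rcases Submodule.mem_sup.mp hx with ⟨y, hy, y', hy', rfl⟩
    rcases hy with ⟨v, rfl⟩
    rcases hy' with ⟨v', rfl⟩
    simp only [Matrix.mulVecLin_apply]
    rw [star_add, map_add, Matrix.mulVec_add, Prange c hzc v, Prange c' hzc' v', add_zero]
  -- conclude for each column of each Mc (single p)
  have hcol : ∀ (p : Fin a) (j : Fin e),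
      (choi Ψ) *ᵥ (T (star ((A j) *ᵥ Pi.single p 1))) = 0 := by
    intro p j
    apply Pmem
    apply hcov p
    refine ⟨Pi.single j 1, ?_⟩
    rw [Matrix.mulVecLin_apply]
    funext b
    simp [Matrix.mulVec, dotProduct, Mc, Pi.single_apply, mul_ite]
  -- final contradiction
  have hfin : (Mc A (Pi.single p₀ 1) *ᵥ z) ⬝ᵥ star (Mc A (Pi.single p₀ 1) *ᵥ z) = 0 := by
    rw [← key (Pi.single p₀ 1)]
    refine Finset.sum_eq_zero fun j _ => ?_
    rw [hcol p₀ j, dotProduct_zero]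
  have : Mc A (Pi.single p₀ 1) *ᵥ z = 0 := by
    rw [dotProduct_comm] at hfin
    exact (dotProduct_star_self_eq_zero).mp hfin
  exact hp₀ this

end DegQ
end Part3

section Part4
open Matrix BigOperators ComplexOrder Module

namespace DegQ

lemma finrank_pi_fin (n : ℕ) : Module.finrank ℂ (Fin n → ℂ) = n := by
  simp [Module.finrank_pi]

lemma rank_add_ker {m : Type*} [Fintype m] {e : ℕ} (M : Matrix m (Fin e) ℂ) :
    M.rank + Module.finrank ℂ ↥(LinearMap.ker M.mulVecLin) = e := by
  have h := LinearMap.finrank_range_add_finrank_ker M.mulVecLin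
  rw [finrank_pi_fin] at h
  exact h

set_option synthInstance.maxHeartbeats 1000000 in
set_option maxHeartbeats 1000000 in
lemma aux_range_le {e : ℕ} (F G : Matrix (Fin 3) (Fin e) ℂ)
    (hF : F.rank ≤ 2) (hG : G.rank ≤ 2)
    (hK : Module.finrank ℂ ↥(LinearMap.ker F.mulVecLin ⊓ LinearMap.ker G.mulVecLin) + 4 ≤ e) :
    LinearMap.range F.mulVecLin ≤ LinearMap.range (F + G).mulVecLin := by
  classical
  set Fl := F.mulVecLin with hFl
  set Gl := G.mulVecLin with hGl
  set f : ↥(LinearMap.ker Gl) →ₗ[ℂ] (Fin 3 → ℂ) := Fl ∘ₗ (LinearMap.ker Gl).subtype with hf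
  have hkerf : Module.finrank ℂ ↥(LinearMap.ker f) =
      Module.finrank ℂ ↥(LinearMap.ker Fl ⊓ LinearMap.ker Gl) := by
    have e1 : LinearMap.ker f = Submodule.comap (LinearMap.ker Gl).subtype (LinearMap.ker Fl) := by
      rw [hf, LinearMap.ker_comp]
    rw [e1, ← Submodule.finrank_map_subtype_eq (LinearMap.ker Gl)
      (Submodule.comap (LinearMap.ker Gl).subtype (LinearMap.ker Fl)),
      Submodule.map_comap_subtype, inf_comm]
  have hrn := LinearMap.finrank_range_add_finrank_ker f
  rw [hkerf] at hrn
  have hrnG := rank_add_ker G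
  rw [← hGl] at hrnG
  have h2 : 2 ≤ Module.finrank ℂ ↥(LinearMap.range f) := by omega
  have hle : LinearMap.range f ≤ LinearMap.range Fl := by
    rw [hf]; exact LinearMap.range_comp_le_range _ _
  have hFr : Module.finrank ℂ ↥(LinearMap.range Fl) ≤ 2 := hF
  have heq : LinearMap.range f = LinearMap.range Fl :=
    Submodule.eq_of_le_of_finrank_le hle (le_trans hFr h2)
  intro y hy
  rw [← heq] at hy
  obtain ⟨x, rfl⟩ := hy
  refine ⟨(x : Fin e → ℂ), ?_⟩
  rw [Matrix.mulVecLin_apply, Matrix.add_mulVec]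
  have hx0 : G *ᵥ (x : Fin e → ℂ) = 0 := x.2
  rw [hx0, add_zero]
  rfl

lemma tech {e : ℕ} (F G : Matrix (Fin 3) (Fin e) ℂ)
    (hF : F.rank ≤ 2) (hG : G.rank ≤ 2) (hFG : (F + G).rank ≤ 2)
    (hsup : 3 ≤ Module.finrank ℂ ↥(LinearMap.range F.mulVecLin ⊔ LinearMap.range G.mulVecLin)) :
    e ≤ 3 + Module.finrank ℂ ↥(LinearMap.ker F.mulVecLin ⊓ LinearMap.ker G.mulVecLin) := by
  by_contra hcon
  push_neg at hcon
  have hK : Module.finrank ℂ ↥(LinearMap.ker F.mulVecLin ⊓ LinearMap.ker G.mulVecLin) + 4 ≤ e := by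
    omega
  have hK' : Module.finrank ℂ ↥(LinearMap.ker G.mulVecLin ⊓ LinearMap.ker F.mulVecLin) + 4 ≤ e := by
    rw [inf_comm]; exact hK
  have h1 := aux_range_le F G hF hG hK
  have h2 := aux_range_le G F hG hF hK'
  rw [add_comm G F] at h2
  have hsle : LinearMap.range F.mulVecLin ⊔ LinearMap.range G.mulVecLin ≤
      LinearMap.range (F + G).mulVecLin := sup_le h1 h2
  have := le_trans hsup (Submodule.finrank_mono hsle)
  have hr : (F + G).rank = Module.finrank ℂ ↥(LinearMap.range (F + G).mulVecLin) := rfl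
  omega

end DegQ
end Part4

section Part5
open Matrix BigOperators Module

namespace DegQ

lemma mulVec_single_col {m : Type*} [Fintype m] {e : ℕ} (M : Matrix m (Fin e) ℂ) (j : Fin e) :
    M *ᵥ Pi.single j 1 = fun b => M b j := by
  funext b
  simp [Matrix.mulVec, dotProduct, Pi.single_apply, mul_ite]

lemma col_mem_range {m : Type*} [Fintype m] {e : ℕ} (M : Matrix m (Fin e) ℂ) (j : Fin e) :
    (fun b => M b j) ∈ LinearMap.range M.mulVecLin :=
  ⟨Pi.single j 1, by rw [Matrix.mulVecLin_apply, mulVec_single_col]⟩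

lemma rank_le_one_decomp {e : ℕ} (M : Matrix (Fin 3) (Fin e) ℂ) (h : M.rank ≤ 1) :
    ∃ (x : Fin 3 → ℂ) (w : Fin e → ℂ), ∀ b j, M b j = x b * w j := by
  classical
  by_cases hM : M = 0
  · exact ⟨0, 0, by simp [hM]⟩
  · have hex : ∃ b j, M b j ≠ 0 := by
      by_contra hc
      push_neg at hc
      exact hM (by ext b j; simpa using hc b j)
    obtain ⟨b₀, j₀, hb₀⟩ := hex
    set x : Fin 3 → ℂ := fun b => M b j₀ with hx
    have hx0 : x ≠ 0 := fun hcon => hb₀ (by have := congrFun hcon b₀; simpa [hx] using this)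
    have hxmem : x ∈ LinearMap.range M.mulVecLin := col_mem_range M j₀
    have hsub : Submodule.span ℂ {x} ≤ LinearMap.range M.mulVecLin :=
      (Submodule.span_singleton_le_iff_mem _ _).mpr hxmem
    have h1 : Module.finrank ℂ ↥(Submodule.span ℂ {x}) = 1 := finrank_span_singleton hx0
    have heq : Submodule.span ℂ {x} = LinearMap.range M.mulVecLin := by
      refine Submodule.eq_of_le_of_finrank_le hsub ?_
      rw [h1]
      exact h
    have hcols : ∀ j, ∃ s : ℂ, s • x = fun b => M b j := by
      intro j
      have := col_mem_range M j
      rw [← heq] at this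
      exact Submodule.mem_span_singleton.mp this
    choose w hw using hcols
    refine ⟨x, w, fun b j => ?_⟩
    have := congrFun (hw j) b
    simp only [Pi.smul_apply, smul_eq_mul] at this
    rw [← this, mul_comm]

lemma exists_minor {e : ℕ} (w w' : Fin e → ℂ) (hw : w ≠ 0) (hw' : ∀ s : ℂ, w' ≠ s • w) :
    ∃ j j', w j * w' j' ≠ w j' * w' j := by
  by_contra hc
  push_neg at hc
  have hj₀ : ∃ j₀, w j₀ ≠ 0 := by
    by_contra hz
    push_neg at hz
    exact hw (funext fun j => hz j)
  obtain ⟨j₀, hj₀⟩ := hj₀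
  refine hw' (w' j₀ / w j₀) (funext fun j => ?_)
  have := hc j₀ j
  rw [Pi.smul_apply, smul_eq_mul, div_mul_eq_mul_div, eq_div_iff hj₀]
  linear_combination this

lemma rank1_pair {e : ℕ} (x x' : Fin 3 → ℂ) (w w' : Fin e → ℂ)
    (hx0 : x ≠ 0) (hxx' : ∀ s : ℂ, x' ≠ s • x)
    (hrk : (Matrix.of fun b j => x b * w j + x' b * w' j).rank ≤ 1) :
    (∃ s : ℂ, w' = s • w) ∨ w = 0 := by
  classical
  by_contra hcon
  push_neg at hcon
  obtain ⟨hw', hw⟩ := hcon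
  obtain ⟨j, j', hd⟩ := exists_minor w w' hw hw'
  set M : Matrix (Fin 3) (Fin e) ℂ := Matrix.of fun b j => x b * w j + x' b * w' j with hM
  set d : ℂ := w j * w' j' - w j' * w' j with hdd
  have hd0 : d ≠ 0 := sub_ne_zero.mpr hd
  have hu : (fun b => M b j) ∈ LinearMap.range M.mulVecLin := col_mem_range M j
  have hu' : (fun b => M b j') ∈ LinearMap.range M.mulVecLin := col_mem_range M j'
  have hxmem : x ∈ LinearMap.range M.mulVecLin := by
    have hcomb : d • x = w' j' • (fun b => M b j) - w' j • (fun b => M b j') := by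
      funext b
      simp only [Pi.smul_apply, Pi.sub_apply, smul_eq_mul, hM, Matrix.of_apply, hdd]
      ring
    have : d • x ∈ LinearMap.range M.mulVecLin := by
      rw [hcomb]
      exact Submodule.sub_mem _ (Submodule.smul_mem _ _ hu) (Submodule.smul_mem _ _ hu')
    have h2 : d⁻¹ • (d • x) ∈ LinearMap.range M.mulVecLin := Submodule.smul_mem _ _ this
    rwa [smul_smul, inv_mul_cancel₀ hd0, one_smul] at h2
  have hx'mem : x' ∈ LinearMap.range M.mulVecLin := by
    have hcomb : d • x' = w j • (fun b => M b j') - w j' • (fun b => M b j) := by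
      funext b
      simp only [Pi.smul_apply, Pi.sub_apply, smul_eq_mul, hM, Matrix.of_apply, hdd]
      ring
    have : d • x' ∈ LinearMap.range M.mulVecLin := by
      rw [hcomb]
      exact Submodule.sub_mem _ (Submodule.smul_mem _ _ hu') (Submodule.smul_mem _ _ hu)
    have h2 : d⁻¹ • (d • x') ∈ LinearMap.range M.mulVecLin := Submodule.smul_mem _ _ this
    rwa [smul_smul, inv_mul_cancel₀ hd0, one_smul] at h2
  have hli : LinearIndependent ℂ ![x', x] := by
    rw [linearIndependent_fin2]
    refine ⟨by simpa using hx0, fun s hs => hxx' s ?_⟩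
    simpa using hs.symm
  have hsp : Module.finrank ℂ ↥(Submodule.span ℂ (Set.range ![x', x])) = 2 := by
    rw [finrank_span_eq_card hli]
    simp
  have hsple : Submodule.span ℂ (Set.range ![x', x]) ≤ LinearMap.range M.mulVecLin := by
    rw [Submodule.span_le]
    intro y hy
    obtain ⟨i, rfl⟩ := hy
    fin_cases i
    · exact hx'mem
    · exact hxmem
  have := Submodule.finrank_mono hsple
  rw [hsp] at this
  have : (2:ℕ) ≤ M.rank := this
  omega

end DegQ
end Part5

section Part6
open Matrix BigOperators Module

namespace DegQ

variable {a e : ℕ} (A : Fin e → Matrix (Fin 3) (Fin a) ℂ)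

lemma rank_le_height3 (M : Matrix (Fin 3) (Fin e) ℂ) : M.rank ≤ 3 := by
  have := Matrix.rank_le_card_height M
  simpa using this

lemma finrank_range_eq_rank (M : Matrix (Fin 3) (Fin e) ℂ) :
    Module.finrank ℂ ↥(LinearMap.range M.mulVecLin) = M.rank := rfl

lemma range_le_span_of_decomp (c : Fin a → ℂ) (x : Fin 3 → ℂ) (w : Fin e → ℂ)
    (hd : ∀ b j, Mc A c b j = x b * w j) :
    LinearMap.range (Mc A c).mulVecLin ≤ Submodule.span ℂ {x} := by
  rintro y ⟨u, rfl⟩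
  rw [Matrix.mulVecLin_apply]
  have : Mc A c *ᵥ u = (∑ j, w j * u j) • x := by
    funext b
    simp only [Matrix.mulVec, dotProduct, Pi.smul_apply, smul_eq_mul, hd,
      Finset.sum_mul]
    exact Finset.sum_congr rfl fun j _ => by ring
  rw [this]
  exact Submodule.smul_mem _ _ (Submodule.mem_span_singleton_self x)

lemma x_mem_range_of_decomp (c : Fin a → ℂ) (x : Fin 3 → ℂ) (w : Fin e → ℂ)
    (hd : ∀ b j, Mc A c b j = x b * w j) (j₁ : Fin e) (hw : w j₁ ≠ 0) :
    x ∈ LinearMap.range (Mc A c).mulVecLin := by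
  have hcol := col_mem_range (Mc A c) j₁
  have : x = (w j₁)⁻¹ • (fun b => Mc A c b j₁) := by
    funext b
    simp only [Pi.smul_apply, smul_eq_mul, hd]
    field_simp
  rw [this]
  exact Submodule.smul_mem _ _ hcol

lemma entry_ne_of_ne_zero {M : Matrix (Fin 3) (Fin e) ℂ} (h : M ≠ 0) :
    ∃ b j, M b j ≠ 0 := by
  by_contra hc
  push_neg at hc
  exact h (by ext b j; simpa using hc b j)

lemma big_rank_le_one (hr1 : ∀ c, (Mc A c).rank ≤ 1) (c₀ : Fin a → ℂ) (h₀ : Mc A c₀ ≠ 0)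
    (c₁ : Fin a → ℂ)
    (h₁ : ¬ (LinearMap.range (Mc A c₁).mulVecLin ≤ LinearMap.range (Mc A c₀).mulVecLin)) :
    (BIG A).rank ≤ 1 := by
  classical
  obtain ⟨x₀, w₀, hd₀⟩ := rank_le_one_decomp (Mc A c₀) (hr1 c₀)
  obtain ⟨b₀, j₀, hbj₀⟩ := entry_ne_of_ne_zero h₀
  rw [hd₀] at hbj₀
  have hx₀ : x₀ ≠ 0 := fun hx => hbj₀ (by rw [hx]; simp)
  have hw₀ : w₀ j₀ ≠ 0 := fun hx => hbj₀ (by rw [hx]; simp)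
  obtain ⟨x₁, w₁, hd₁⟩ := rank_le_one_decomp (Mc A c₁) (hr1 c₁)
  have hM₁ : Mc A c₁ ≠ 0 := by
    intro hz
    apply h₁
    intro y hy
    obtain ⟨u, rfl⟩ := hy
    rw [Matrix.mulVecLin_apply, hz]
    simp only [Matrix.zero_mulVec]
    exact Submodule.zero_mem _
  obtain ⟨b₁, j₁, hbj₁⟩ := entry_ne_of_ne_zero hM₁
  rw [hd₁] at hbj₁
  have hx₁ : x₁ ≠ 0 := fun hx => hbj₁ (by rw [hx]; simp)
  have hw₁ : w₁ j₁ ≠ 0 := fun hx => hbj₁ (by rw [hx]; simp)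
  -- x₁ is not a multiple of x₀
  have hx₁x₀ : ∀ s : ℂ, x₁ ≠ s • x₀ := by
    intro s hs
    apply h₁
    refine le_trans (range_le_span_of_decomp A c₁ x₁ w₁ hd₁) ?_
    rw [Submodule.span_le]
    intro y hy
    rw [Set.mem_singleton_iff] at hy
    subst hy
    rw [hs]
    exact Submodule.smul_mem _ _ (x_mem_range_of_decomp A c₀ x₀ w₀ hd₀ j₀ hw₀)
  -- w₁ is a multiple of w₀
  have hpair : (∃ s : ℂ, w₁ = s • w₀) ∨ w₀ = 0 := by
    apply rank1_pair x₀ x₁ w₀ w₁ hx₀ hx₁x₀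
    have hEq : (Matrix.of fun b j => x₀ b * w₀ j + x₁ b * w₁ j) = Mc A (c₀ + c₁) := by
      rw [Mc_add]
      ext b j
      simp [hd₀, hd₁]
    rw [hEq]
    exact hr1 _
  have hw₀0 : w₀ ≠ 0 := fun hz => hw₀ (by rw [hz]; rfl)
  obtain ⟨s₁, hs₁⟩ := hpair.resolve_right hw₀0
  have hs₁0 : s₁ ≠ 0 := by
    intro hz
    apply hw₁
    rw [hs₁, hz]
    simp
  -- every Mc (single p) has row direction w₀
  have hYp : ∀ p : Fin a, ∃ y : Fin 3 → ℂ, ∀ b j,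
      Mc A (Pi.single p 1) b j = y b * w₀ j := by
    intro p
    obtain ⟨xp, wp, hdp⟩ := rank_le_one_decomp (Mc A (Pi.single p 1)) (hr1 _)
    by_cases hzp : Mc A (Pi.single p 1) = 0
    · exact ⟨0, fun b j => by rw [hzp]; simp⟩
    obtain ⟨bp, jp, hbjp⟩ := entry_ne_of_ne_zero hzp
    rw [hdp] at hbjp
    have hxp : xp ≠ 0 := fun hx => hbjp (by rw [hx]; simp)
    have hwp : wp jp ≠ 0 := fun hx => hbjp (by rw [hx]; simp)
    by_cases hcase : ∀ s : ℂ, xp ≠ s • x₀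
    · have hp2 : (∃ s : ℂ, wp = s • w₀) ∨ w₀ = 0 := by
        apply rank1_pair x₀ xp w₀ wp hx₀ hcase
        have hEq : (Matrix.of fun b j => x₀ b * w₀ j + xp b * wp j) =
            Mc A (c₀ + Pi.single p 1) := by
          rw [Mc_add]
          ext b j
          simp [hd₀, hdp]
        rw [hEq]
        exact hr1 _
      obtain ⟨s, hs⟩ := hp2.resolve_right hw₀0
      refine ⟨fun b => xp b * s, fun b j => ?_⟩
      rw [hdp, hs]
      simp only [Pi.smul_apply, smul_eq_mul]
      ring
    · push_neg at hcase
      obtain ⟨s, hs⟩ := hcase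
      have hs0 : s ≠ 0 := by
        intro hz
        apply hxp
        rw [hs, hz, zero_smul]
      have hxpx₁ : ∀ t : ℂ, xp ≠ t • x₁ := by
        intro t ht
        have ht0 : t ≠ 0 := by
          intro hz
          apply hxp
          rw [ht, hz, zero_smul]
        apply hx₁x₀ (t⁻¹ * s)
        funext b
        have h3 : t * x₁ b = s * x₀ b := by
          have e1 := congrFun ht b
          have e2 := congrFun hs b
          simp only [Pi.smul_apply, smul_eq_mul] at e1 e2
          rw [← e1, e2]
        have h4 : x₁ b = t⁻¹ * (s * x₀ b) := by
          field_simp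
          linear_combination h3
        simp only [Pi.smul_apply, smul_eq_mul]
        rw [h4]; ring
      have hp2 : (∃ t : ℂ, wp = t • w₁) ∨ w₁ = 0 := by
        apply rank1_pair x₁ xp w₁ wp hx₁ hxpx₁
        have hEq : (Matrix.of fun b j => x₁ b * w₁ j + xp b * wp j) =
            Mc A (c₁ + Pi.single p 1) := by
          rw [Mc_add]
          ext b j
          simp [hd₁, hdp]
        rw [hEq]
        exact hr1 _
      have hw₁0 : w₁ ≠ 0 := fun hz => hw₁ (by rw [hz]; rfl)
      obtain ⟨t, ht⟩ := hp2.resolve_right hw₁0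
      refine ⟨fun b => xp b * (t * s₁), fun b j => ?_⟩
      rw [hdp, ht, hs₁]
      simp only [Pi.smul_apply, smul_eq_mul]
      ring
  choose Y hY using hYp
  -- BIG has rank ≤ 1
  set Xv : Fin a × Fin 3 → ℂ := fun pb => Y pb.1 pb.2 with hXv
  have hrange : LinearMap.range (BIG A).mulVecLin ≤ Submodule.span ℂ {Xv} := by
    rintro y ⟨u, rfl⟩
    rw [Matrix.mulVecLin_apply]
    have : BIG A *ᵥ u = (∑ j, w₀ j * u j) • Xv := by
      funext pb
      obtain ⟨p, b⟩ := pb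
      simp only [Matrix.mulVec, dotProduct, Pi.smul_apply, smul_eq_mul]
      have hBentry : ∀ j, BIG A (p, b) j = Y p b * w₀ j := by
        intro j
        rw [BIG_eq_Mc, hY p b j]
      simp only [hBentry, hXv, Finset.sum_mul]
      exact Finset.sum_congr rfl fun j _ => by ring
    rw [this]
    exact Submodule.smul_mem _ _ (Submodule.mem_span_singleton_self Xv)
  have hfr : Module.finrank ℂ ↥(Submodule.span ℂ ({Xv} : Set (Fin a × Fin 3 → ℂ))) ≤ 1 := by
    by_cases hXz : Xv = 0
    · have hsp0 : Submodule.span ℂ ({Xv} : Set (Fin a × Fin 3 → ℂ)) = ⊥ := by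
        rw [hXz]
        exact Submodule.span_zero_singleton ℂ
      rw [hsp0]
      simp
    · rw [finrank_span_singleton hXz]
  have := Submodule.finrank_mono hrange
  have hbr : (BIG A).rank = Module.finrank ℂ ↥(LinearMap.range (BIG A).mulVecLin) := rfl
  omega

end DegQ
end Part6

section Part7
open Matrix BigOperators Module

namespace DegQ

variable {a e : ℕ} (A : Fin e → Matrix (Fin 3) (Fin a) ℂ)

lemma exists_z (c c' : Fin a → ℂ)
    (hker : e ≤ 3 + Module.finrank ℂ
      ↥(LinearMap.ker (Mc A c).mulVecLin ⊓ LinearMap.ker (Mc A c').mulVecLin))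
    (ht : 4 ≤ (BIG A).rank) :
    ∃ z : Fin e → ℂ, Mc A c *ᵥ z = 0 ∧ Mc A c' *ᵥ z = 0 ∧
      ∃ p, Mc A (Pi.single p 1) *ᵥ z ≠ 0 := by
  have hrnB := rank_add_ker (BIG A)
  by_contra hcon
  push_neg at hcon
  have hle : (LinearMap.ker (Mc A c).mulVecLin ⊓ LinearMap.ker (Mc A c').mulVecLin) ≤
      LinearMap.ker (BIG A).mulVecLin := by
    intro z hz
    obtain ⟨hz1, hz2⟩ := Submodule.mem_inf.mp hz
    rw [LinearMap.mem_ker, Matrix.mulVecLin_apply] at hz1 hz2 ⊢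
    have h3 := hcon z hz1 hz2
    funext pb
    obtain ⟨p, b⟩ := pb
    rw [BIG_mulVec, h3 p]
    rfl
  have := Submodule.finrank_mono hle
  omega

lemma exists_pair (ht : 4 ≤ (BIG A).rank) :
    ∃ c c' : Fin a → ℂ,
      (∀ p, LinearMap.range (Mc A (Pi.single p 1)).mulVecLin ≤
        LinearMap.range (Mc A c).mulVecLin ⊔ LinearMap.range (Mc A c').mulVecLin) ∧
      e ≤ 3 + Module.finrank ℂ
        ↥(LinearMap.ker (Mc A c).mulVecLin ⊓ LinearMap.ker (Mc A c').mulVecLin) := by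
  classical
  by_cases h3 : ∃ c, 3 ≤ (Mc A c).rank
  · obtain ⟨c, hc⟩ := h3
    have hr3 : (Mc A c).rank = 3 := le_antisymm (rank_le_height3 (Mc A c)) hc
    have htop : LinearMap.range (Mc A c).mulVecLin = ⊤ := by
      apply Submodule.eq_top_of_finrank_eq
      rw [finrank_pi_fin, finrank_range_eq_rank, hr3]
    refine ⟨c, c, fun p => ?_, ?_⟩
    · rw [sup_idem, htop]
      exact le_top
    · rw [inf_idem]
      have := rank_add_ker (Mc A c)
      omega
  push_neg at h3
  have hr2 : ∀ c, (Mc A c).rank ≤ 2 := fun c => by have := h3 c; omega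
  by_cases h2 : ∃ c c', 3 ≤ Module.finrank ℂ
      ↥(LinearMap.range (Mc A c).mulVecLin ⊔ LinearMap.range (Mc A c').mulVecLin)
  · obtain ⟨c, c', hcc⟩ := h2
    refine ⟨c, c', fun p => ?_, ?_⟩
    · have htop : LinearMap.range (Mc A c).mulVecLin ⊔
          LinearMap.range (Mc A c').mulVecLin = ⊤ := by
        apply Submodule.eq_top_of_finrank_eq
        rw [finrank_pi_fin]
        refine le_antisymm ?_ hcc
        have := Submodule.finrank_le (LinearMap.range (Mc A c).mulVecLin ⊔
          LinearMap.range (Mc A c').mulVecLin)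
        rwa [finrank_pi_fin] at this
      rw [htop]
      exact le_top
    · refine tech (Mc A c) (Mc A c') (hr2 c) (hr2 c') ?_ hcc
      rw [← Mc_add]
      exact hr2 _
  push_neg at h2
  by_cases h1 : ∃ c, 2 ≤ (Mc A c).rank
  · obtain ⟨c, hc⟩ := h1
    have hr2c : (Mc A c).rank = 2 := le_antisymm (hr2 c) hc
    have hdom : ∀ c'', LinearMap.range (Mc A c'').mulVecLin ≤
        LinearMap.range (Mc A c).mulVecLin := by
      intro c''
      have hsup := h2 c c''
      have heq : LinearMap.range (Mc A c).mulVecLin =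
          LinearMap.range (Mc A c).mulVecLin ⊔ LinearMap.range (Mc A c'').mulVecLin := by
        apply Submodule.eq_of_le_of_finrank_le le_sup_left
        rw [finrank_range_eq_rank, hr2c]
        omega
      rw [heq]
      exact le_sup_right
    refine ⟨c, c, fun p => ?_, ?_⟩
    · rw [sup_idem]
      exact hdom _
    · rw [inf_idem]
      have := rank_add_ker (Mc A c)
      omega
  push_neg at h1
  have hr1 : ∀ c, (Mc A c).rank ≤ 1 := fun c => by have := h1 c; omega
  by_cases h0 : ∃ c₀, Mc A c₀ ≠ 0
  · obtain ⟨c₀, hc₀⟩ := h0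
    by_cases hdom : ∀ cc, LinearMap.range (Mc A cc).mulVecLin ≤
        LinearMap.range (Mc A c₀).mulVecLin
    · refine ⟨c₀, c₀, fun p => ?_, ?_⟩
      · rw [sup_idem]
        exact hdom _
      · rw [inf_idem]
        have := rank_add_ker (Mc A c₀)
        have := hr1 c₀
        omega
    · push_neg at hdom
      obtain ⟨c₁, hc₁⟩ := hdom
      have := big_rank_le_one A hr1 c₀ hc₀ c₁ hc₁
      omega
  · push_neg at h0
    exfalso
    have hB0 : BIG A = 0 := by
      ext ⟨p, b⟩ j
      rw [BIG_eq_Mc, h0 (Pi.single p 1)]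
      rfl
    rw [hB0, Matrix.rank_zero] at ht
    omega

end DegQ
end Part7

/-- a degradable channel with qutrit output has Choi rank at most 3. -/
theorem degradable_qutrit_output_choiRank {a : ℕ}
    (Φ : Matrix (Fin a) (Fin a) ℂ →ₗ[ℂ] Matrix (Fin 3) (Fin 3) ℂ)
    (hΦ : IsCPTP Φ) (hdeg : Degradable Φ) :
    (choi Φ).rank ≤ 3 := by
  obtain ⟨e, A, ⟨hKraus, hTP⟩, Ψ, hΨ, hcomp⟩ := hdeg
  by_contra hcon
  push_neg at hcon
  have ht : 4 ≤ (DegQ.BIG A).rank := by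
    have h := DegQ.choi_eq_BIG A Φ hKraus
    rw [h, Matrix.rank_self_mul_conjTranspose] at hcon
    omega
  obtain ⟨c, c', hcov, hker⟩ := DegQ.exists_pair A ht
  obtain ⟨z, h1, h2, p₀, hp₀⟩ := DegQ.exists_z A c c' hker ht
  exact DegQ.main_contra A Φ hKraus Ψ hΨ.1 hcomp c c' z h1 h2 hcov p₀ hp₀
end

section
/- The channel Φ: M_3 → M_2 with Kraus operators A_0 = [[1,0,0],[0,1/√2,0]] and A_1 = [[0,1/√2,0],[0,0,1]] satisfies Φ = Φ^C (with the complementary channel computed via (Φ^C(ρ))_{jk} = Tr A_j ρ A_k†), and hence is both degradable and anti-degradable with degrading map the identity. -/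
open Matrix Kronecker BigOperators ComplexOrder

section Aux

private noncomputable abbrev Aops : Fin 2 → Matrix (Fin 2) (Fin 3) ℂ :=
  ![!![1, 0, 0; 0, (Real.sqrt 2 : ℂ)⁻¹, 0],
    !![0, (Real.sqrt 2 : ℂ)⁻¹, 0; 0, 0, 1]]

private lemma sq2 : ((Real.sqrt 2 : ℂ))⁻¹ * ((Real.sqrt 2 : ℂ))⁻¹ = (2 : ℂ)⁻¹ := by
  rw [← mul_inv]
  norm_cast
  rw [Real.mul_self_sqrt (by norm_num)]
  norm_num

private lemma key : complementMap Aops = krausMap Aops := by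
  apply LinearMap.ext
  intro ρ
  ext j k
  fin_cases j <;> fin_cases k <;>
    simp [complementMap, krausMap, Aops, Matrix.trace, Matrix.mul_apply,
      Matrix.vecMul, dotProduct, Matrix.conjTranspose_apply,
      Fin.sum_univ_succ, Complex.star_def, map_inv₀, Complex.conj_ofReal] <;> ring

private lemma idCPTP {m : Type*} [Fintype m] [DecidableEq m] :
    IsCPTP (LinearMap.id : Matrix m m ℂ →ₗ[ℂ] Matrix m m ℂ) := by
  constructor
  · have : choi (LinearMap.id : Matrix m m ℂ →ₗ[ℂ] Matrix m m ℂ) =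
        (Matrix.of fun (_ : Unit) (p : m × m) =>
          if p.1 = p.2 then (1 : ℂ) else 0)ᴴ *
        (Matrix.of fun (_ : Unit) (p : m × m) =>
          if p.1 = p.2 then (1 : ℂ) else 0) := by
      ext p q
      simp [choi, Matrix.mul_apply, Matrix.single, Matrix.conjTranspose_apply]
      aesop
    rw [this]
    exact Matrix.posSemidef_conjTranspose_mul_self _
  · intro ρ; rfl

private lemma krausRepA : IsKrausRep Aops (krausMap Aops) := by
  constructor
  · intro ρ; rfl
  · ext i j
    fin_cases i <;> fin_cases j <;>
      simp [Aops, Matrix.mul_apply, Matrix.one_apply, Fin.sum_univ_succ,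
        Matrix.conjTranspose_apply, sq2] <;> norm_num

end Aux

/-- the channel `M_3 → M_2` with the given Kraus operators is
self-complementary, hence degradable and anti-degradable (degrading map the identity). -/
theorem three_to_two_self_complementary :
    complementMap
        (![!![1, 0, 0; 0, (Real.sqrt 2 : ℂ)⁻¹, 0],
           !![0, (Real.sqrt 2 : ℂ)⁻¹, 0; 0, 0, 1]] :
          Fin 2 → Matrix (Fin 2) (Fin 3) ℂ)
      = krausMap
        (![!![1, 0, 0; 0, (Real.sqrt 2 : ℂ)⁻¹, 0],
           !![0, (Real.sqrt 2 : ℂ)⁻¹, 0; 0, 0, 1]] :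
          Fin 2 → Matrix (Fin 2) (Fin 3) ℂ) ∧
    Degradable (krausMap
        (![!![1, 0, 0; 0, (Real.sqrt 2 : ℂ)⁻¹, 0],
           !![0, (Real.sqrt 2 : ℂ)⁻¹, 0; 0, 0, 1]] :
          Fin 2 → Matrix (Fin 2) (Fin 3) ℂ)) ∧
    AntiDegradable (krausMap
        (![!![1, 0, 0; 0, (Real.sqrt 2 : ℂ)⁻¹, 0],
           !![0, (Real.sqrt 2 : ℂ)⁻¹, 0; 0, 0, 1]] :
          Fin 2 → Matrix (Fin 2) (Fin 3) ℂ)) := by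
  refine ⟨key, ?_, ?_⟩
  · exact ⟨2, Aops, krausRepA, LinearMap.id, idCPTP, by
      rw [LinearMap.id_comp, key]⟩
  · exact ⟨2, Aops, krausRepA, LinearMap.id, idCPTP, by
      rw [LinearMap.id_comp, key]⟩
end
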